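/- arXiv:2210.01671 — 6 statements merged into one kernel-verified Lean document; each statement's English description precedes it below -/
import Mathlib

section
/- For any c > 0, any positive integer m, and any real t, the principal-value integral (m!/(2πi)) ∫_{c−i∞}^{c+i∞} e^{ts}/s^{m+1} ds equals t^m if t ≥ 0 and equals 0 if t < 0. -/
open MeasureTheory Set Filter Topology Complex

lemma aux_integrableOn (a : ℂ) (ha : 0 < a.re) (m : ℕ) :
    IntegrableOn (fun x : ℝ => (x:ℂ)^m * Complex.exp (-(a * x))) (Ioi 0) := by
  have h := integrableOn_rpow_mul_exp_neg_mul_rpow (p := 1) (s := m) (b := a.re)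
    (by exact_mod_cast neg_one_lt_zero.trans_le (Nat.cast_nonneg m)) zero_lt_one ha
  refine Integrable.mono' h ?_ ?_
  · exact (Continuous.continuousOn (by continuity)).aestronglyMeasurable measurableSet_Ioi
  · filter_upwards [ae_restrict_mem measurableSet_Ioi] with x hx
    have hx0 : (0:ℝ) < x := hx
    rw [norm_mul, norm_pow, Complex.norm_real, Real.norm_eq_abs, Complex.norm_exp,
      abs_of_pos hx0]
    simp only [neg_re, mul_re, Complex.ofReal_re, Complex.ofReal_im, mul_zero, sub_zero]
    rw [Real.rpow_one, Real.rpow_natCast, neg_mul]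

lemma aux_tendsto_zero (a : ℂ) (ha : 0 < a.re) (k : ℕ) :
    Tendsto (fun x : ℝ => (x:ℂ)^k * Complex.exp (-(a * x))) atTop (𝓝 0) := by
  rw [tendsto_zero_iff_norm_tendsto_zero]
  have h := tendsto_rpow_mul_exp_neg_mul_atTop_nhds_zero k a.re ha
  apply h.congr'
  filter_upwards [eventually_gt_atTop (0:ℝ)] with x hx
  rw [norm_mul, norm_pow, Complex.norm_real, Real.norm_eq_abs, Complex.norm_exp,
    abs_of_pos hx]
  simp only [neg_re, mul_re, Complex.ofReal_re, Complex.ofReal_im, mul_zero, sub_zero]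
  rw [Real.rpow_natCast, neg_mul]

lemma aux_integral (a : ℂ) (ha : 0 < a.re) : ∀ m : ℕ,
    ∫ x in Ioi (0:ℝ), (x:ℂ)^m * Complex.exp (-(a * x)) = m.factorial / a ^ (m+1) := by
  have ha0 : a ≠ 0 := fun h => by simp [h] at ha
  intro m
  induction m with
  | zero =>
      have key := integral_Ioi_of_hasDerivAt_of_tendsto
        (f := fun x : ℝ => -a⁻¹ * Complex.exp (-(a * x)))
        (f' := fun x : ℝ => Complex.exp (-(a * x))) (a := 0)
        ((Continuous.continuousWithinAt (by continuity)))
        (fun x _ => ?_) ((aux_integrableOn a ha 0).congr_fun (by intro x hx; simp)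
          measurableSet_Ioi) (m := 0) ?_
      · simp only [Complex.ofReal_zero, mul_zero, neg_zero, Complex.exp_zero, mul_one] at key
        simp only [pow_zero, one_mul, Nat.factorial_zero, Nat.cast_one, pow_one]
        rw [key]
        simp [one_div]
      · have h1 : HasDerivAt (fun y : ℂ => -a⁻¹ * Complex.exp (-(a * y)))
            (-a⁻¹ * (Complex.exp (-(a * x)) * (-a))) (x:ℂ) := by
          have hin : HasDerivAt (fun y : ℂ => -(a * y)) (-a) (x:ℂ) := by
            have := ((hasDerivAt_id (x:ℂ)).const_mul a).neg
            simp only [mul_one] at this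
            exact this
          have := (Complex.hasDerivAt_exp (-(a * (x:ℂ)))).comp (x:ℂ) hin
          exact this.const_mul (-a⁻¹)
        have h2 := h1.comp_ofReal
        convert h2 using 1
        · rfl
        field_simp
      · have := (aux_tendsto_zero a ha 0).const_mul (-a⁻¹)
        simpa using this
  | succ m ih =>
      have key := integral_Ioi_of_hasDerivAt_of_tendsto
        (f := fun x : ℝ => (x:ℂ)^(m+1) * Complex.exp (-(a * x)))
        (f' := fun x : ℝ => (m+1) * ((x:ℂ)^m * Complex.exp (-(a * x)))
          - a * ((x:ℂ)^(m+1) * Complex.exp (-(a * x)))) (a := 0)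
        ((Continuous.continuousWithinAt (by continuity)))
        (fun x _ => ?_) ?_ (aux_tendsto_zero a ha (m+1))
      · have hint1 := aux_integrableOn a ha m
        have hint2 := aux_integrableOn a ha (m+1)
        rw [integral_sub (hint1.const_mul _) (hint2.const_mul _),
          integral_const_mul, integral_const_mul, ih] at key
        simp only [Complex.ofReal_zero, mul_zero, neg_zero, Complex.exp_zero, mul_one,
          zero_pow (Nat.succ_ne_zero m), zero_mul, zero_sub, sub_zero] at key
        rw [sub_eq_zero] at key
        have hpow : a ^ (m+1) ≠ 0 := pow_ne_zero _ ha0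
        have hpow2 : a ^ (m+1+1) ≠ 0 := pow_ne_zero _ ha0
        rw [Nat.factorial_succ]
        push_cast
        rw [eq_div_iff hpow2]
        field_simp at key
        rw [key]
        ring
      · have h1 : HasDerivAt (fun y : ℂ => y^(m+1) * Complex.exp (-(a * y)))
            ((m+1) * (x:ℂ)^m * Complex.exp (-(a * x))
              + (x:ℂ)^(m+1) * (Complex.exp (-(a * x)) * (-a))) (x:ℂ) := by
          have hp : HasDerivAt (fun y : ℂ => y^(m+1)) ((m+1) * (x:ℂ)^m) (x:ℂ) := by
            simpa using hasDerivAt_pow (m+1) (x:ℂ)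
          have he : HasDerivAt (fun y : ℂ => Complex.exp (-(a * y)))
              (Complex.exp (-(a * x)) * (-a)) (x:ℂ) :=
            (Complex.hasDerivAt_exp (-(a * (x:ℂ)))).comp (x:ℂ)
              (by have := ((hasDerivAt_id (x:ℂ)).const_mul a).neg
                  simp only [mul_one] at this
                  exact this)
          exact hp.mul he
        have h2 := h1.comp_ofReal
        convert h2 using 1
        · rfl
        ring
      · exact ((aux_integrableOn a ha m).const_mul _).sub
          ((aux_integrableOn a ha (m+1)).const_mul _)

noncomputable def pf (c : ℝ) (m : ℕ) : ℝ → ℂ :=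
  fun x => ((max x 0 : ℝ) : ℂ)^m * Complex.exp (-((c:ℂ) * x))

lemma pf_cont (c : ℝ) (m : ℕ) : Continuous (pf c m) := by
  unfold pf; continuity

lemma pf_zero (c : ℝ) (m : ℕ) (hm : 1 ≤ m) {x : ℝ} (hx : x ≤ 0) : pf c m x = 0 := by
  unfold pf
  rw [max_eq_right hx]
  simp [zero_pow (by omega : m ≠ 0)]

lemma pf_pos (c : ℝ) (m : ℕ) {x : ℝ} (hx : 0 ≤ x) :
    pf c m x = (x:ℂ)^m * Complex.exp (-((c:ℂ) * x)) := by
  unfold pf; rw [max_eq_left hx]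

set_option maxHeartbeats 1000000 in
lemma pf_integrable (c : ℝ) (hc : 0 < c) (m : ℕ) (hm : 1 ≤ m) : Integrable (pf c m) := by
  have hcre : 0 < ((c:ℂ)).re := by simpa using hc
  have h0 := aux_integrableOn (c:ℂ) hcre m
  have h1 : IntegrableOn (pf c m) (Ioi 0) := by
    apply h0.congr_fun _ measurableSet_Ioi
    intro x hx
    exact (pf_pos c m (le_of_lt hx)).symm
  have h2 : IntegrableOn (pf c m) (Iic 0) := by
    apply (integrableOn_zero :
      IntegrableOn (fun _ : ℝ => (0:ℂ)) (Iic 0) volume).congr_fun _ measurableSet_Iic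
    intro x hx
    exact (pf_zero c m hm hx).symm
  rw [← integrableOn_univ, ← Set.Iic_union_Ioi (a := (0:ℝ))]
  exact h2.union h1
open FourierTransform Real in
lemma pf_fourier (c : ℝ) (hc : 0 < c) (m : ℕ) (hm : 1 ≤ m) (ξ : ℝ) :
    𝓕 (pf c m) ξ = m.factorial / ((c:ℂ) + (2 * π * ξ) * Complex.I) ^ (m+1) := by
  rw [Real.fourier_real_eq_integral_exp_smul]
  have ha : (0:ℝ) < ((c:ℂ) + (2*π*ξ)*Complex.I).re := by simp [hc]
  rw [← setIntegral_eq_integral_of_forall_compl_eq_zero (s := Ioi (0:ℝ)) (fun x hx => ?_),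
    ← aux_integral ((c:ℂ) + (2*π*ξ)*Complex.I) ha m]
  · apply setIntegral_congr_fun measurableSet_Ioi
    intro x hx
    simp only []
    rw [pf_pos c m (le_of_lt hx), smul_eq_mul, mul_comm, mul_assoc, ← Complex.exp_add]
    congr 2
    push_cast
    ring
  · simp only [mem_Ioi, not_lt] at hx
    rw [pf_zero c m hm hx, smul_zero]
open FourierTransform Real in
lemma denom_ne (c : ℝ) (hc : 0 < c) (v : ℝ) : ((c:ℂ) + v * Complex.I) ≠ 0 := by
  intro h
  have := congrArg Complex.re h
  simp at this
  exact hc.ne' this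

open FourierTransform Real in
lemma inv_integrable (c : ℝ) (hc : 0 < c) (m : ℕ) (hm : 1 ≤ m) :
    Integrable (fun v : ℝ => (((c:ℂ) + v * Complex.I) ^ (m+1))⁻¹) := by
  have hcont : Continuous (fun v : ℝ => (((c:ℂ) + v * Complex.I) ^ (m+1))⁻¹) := by
    apply Continuous.inv₀
    · continuity
    · intro v; exact pow_ne_zero _ (denom_ne c hc v)
  have h1 : Integrable (fun v : ℝ => (1 + (c⁻¹*v)^2)⁻¹) :=
    (integrable_comp_mul_left_iff (fun x : ℝ => (1+x^2)⁻¹)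
      (inv_ne_zero hc.ne')).mpr integrable_inv_one_add_sq
  have hbase : Integrable (fun v : ℝ => (c^2 + v^2)⁻¹) := by
    refine (h1.const_mul ((c^2)⁻¹)).congr ?_
    filter_upwards with v
    rw [← mul_inv]
    congr 1
    field_simp
  refine (hbase.const_mul ((c^(m-1))⁻¹)).mono' hcont.aestronglyMeasurable ?_
  filter_upwards with v
  set r := ‖(c:ℂ) + v * Complex.I‖ with hr
  have hcr : c ≤ r := by
    have := Complex.abs_re_le_norm ((c:ℂ) + v * Complex.I)
    simp only [Complex.add_re, Complex.ofReal_re, Complex.mul_re, Complex.I_re, Complex.I_im,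
      Complex.ofReal_im, mul_zero, zero_mul, mul_one, sub_zero, zero_sub, add_zero] at this
    calc c ≤ |c + v * 0 - 0| := by simp [abs_of_pos hc]
    _ ≤ r := by simpa using this
  have hr2 : r^2 = c^2 + v^2 := by
    rw [hr, Complex.sq_norm, Complex.normSq_apply]
    simp
    ring
  have hkey : c^(m-1) * (c^2 + v^2) ≤ r^(m+1) := by
    have h3 : r^(m+1) = r^(m-1) * r^2 := by
      rw [← pow_add]
      congr 1
      omega
    rw [h3, ← hr2]
    exact mul_le_mul (pow_le_pow_left₀ hc.le hcr _) le_rfl (by positivity)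
      (by positivity)
  have hpos : (0:ℝ) < c^(m-1) * (c^2 + v^2) := by positivity
  rw [norm_inv, norm_pow, ← hr, ← mul_inv]
  exact inv_anti₀ hpos hkey

open FourierTransform Real RealInnerProductSpace in
/-- Lemma 1 of the paper: the Perron-type formula
`(m!/(2πi)) ∫_{c-i∞}^{c+i∞} e^{ts}/s^{m+1} ds = t^m` for `t ≥ 0` and `= 0` for `t < 0`,
where the vertical integral is understood as a symmetric limit. -/
theorem stmt2 (c : ℝ) (hc : 0 < c) (m : ℕ) (hm : 1 ≤ m) (t : ℝ) :
    Tendsto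
      (fun T : ℝ => (m.factorial : ℂ) / (2 * Real.pi * Complex.I) *
        ∫ v in (-T)..T,
          Complex.exp ((t : ℂ) * ((c : ℂ) + (v : ℂ) * Complex.I)) /
            ((c : ℂ) + (v : ℂ) * Complex.I) ^ (m + 1) * Complex.I)
      atTop (𝓝 (if 0 ≤ t then (t : ℂ) ^ m else 0)) := by
  have hπ := Real.pi_pos
  have hHint : Integrable (fun v : ℝ => Complex.exp ((t : ℂ) * ((c : ℂ) + (v : ℂ) * Complex.I)) /
      ((c : ℂ) + (v : ℂ) * Complex.I) ^ (m + 1)) := by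
    refine ((inv_integrable c hc m hm).norm.const_mul (Real.exp (t*c))).mono' ?_ ?_
    · apply Continuous.aestronglyMeasurable
      exact Continuous.div (by continuity) (by continuity)
        (fun v => pow_ne_zero _ (denom_ne c hc v))
    · filter_upwards with v
      rw [div_eq_mul_inv, norm_mul, norm_inv]
      apply mul_le_mul_of_nonneg_right ?_ (by positivity)
      rw [Complex.norm_exp]
      apply le_of_eq
      congr 1
      simp [Complex.mul_re]
  have hF' : Integrable (𝓕 (pf c m)) := by
    have h2π : (2*π) ≠ 0 := by positivity
    have h0 := ((integrable_comp_mul_left_iff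
      (fun v : ℝ => (((c:ℂ) + v * Complex.I)^(m+1))⁻¹) h2π).mpr
      (inv_integrable c hc m hm)).const_mul ((m.factorial : ℂ))
    apply h0.congr
    filter_upwards with ξ
    rw [pf_fourier c hc m hm ξ, div_eq_mul_inv]
    push_cast
    ring_nf
  have hinv := (pf_integrable c hc m hm).fourierInv_fourier_eq hF' (v := t) ((pf_cont c m).continuousAt)
  -- compute the inverse Fourier integral
  have e1 : 𝓕⁻ (𝓕 (pf c m)) t = (m.factorial : ℂ) * Complex.exp (-((t:ℂ) * (c:ℂ))) *
      (((2*π)⁻¹ : ℝ) • ∫ v : ℝ, Complex.exp ((t : ℂ) * ((c : ℂ) + (v : ℂ) * Complex.I)) /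
        ((c : ℂ) + (v : ℂ) * Complex.I) ^ (m + 1)) := by
    rw [Real.fourierInv_eq']
    have step1 : (∫ ξ : ℝ, Complex.exp (↑(2 * π * ⟪ξ, t⟫) * Complex.I) • 𝓕 (pf c m) ξ)
        = ∫ ξ : ℝ, (m.factorial : ℂ) * Complex.exp (-((t:ℂ) * (c:ℂ))) *
          ((fun v : ℝ => Complex.exp ((t : ℂ) * ((c : ℂ) + (v : ℂ) * Complex.I)) /
            ((c : ℂ) + (v : ℂ) * Complex.I) ^ (m + 1)) (2 * π * ξ)) := by
      apply integral_congr_ae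
      filter_upwards with ξ
      rw [pf_fourier c hc m hm ξ]
      simp only [RCLike.inner_apply, conj_trivial, smul_eq_mul]
      have hexp : Complex.exp ((t:ℂ) * ((c:ℂ) + ((2*π*ξ:ℝ):ℂ) * Complex.I))
          = Complex.exp ((t:ℂ)*(c:ℂ)) * Complex.exp (((2*π*(ξ*t):ℝ):ℂ) * Complex.I) := by
        rw [← Complex.exp_add]; congr 1; push_cast; ring
      have hden : ((c:ℂ) + ((2*π*ξ:ℝ):ℂ) * Complex.I) ^ (m+1) ≠ 0 :=
        pow_ne_zero _ (by exact_mod_cast denom_ne c hc (2*π*ξ))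
      have hden2 : ((c:ℂ) + (2*(π:ℂ)*(ξ:ℂ)) * Complex.I) ^ (m+1) ≠ 0 := by
        push_cast at hden; exact hden
      rw [hexp, Complex.exp_neg, div_eq_mul_inv, div_eq_mul_inv]
      push_cast
      field_simp
    rw [step1, integral_const_mul, MeasureTheory.Measure.integral_comp_mul_left
      (fun v : ℝ => Complex.exp ((t : ℂ) * ((c : ℂ) + (v : ℂ) * Complex.I)) /
        ((c : ℂ) + (v : ℂ) * Complex.I) ^ (m + 1)) (2*π),
      abs_of_pos (by positivity : (0:ℝ) < (2*π)⁻¹)]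
  rw [hinv] at e1
  -- limit
  have hlim := (intervalIntegral_tendsto_integral (hHint.mul_const Complex.I)
    tendsto_neg_atTop_atBot tendsto_id).const_mul
    ((m.factorial : ℂ) / (2 * Real.pi * Complex.I))
  convert hlim using 2
  · rfl
  rw [integral_mul_const]
  set S : ℂ := ∫ v : ℝ, Complex.exp ((t : ℂ) * ((c : ℂ) + (v : ℂ) * Complex.I)) /
      ((c : ℂ) + (v : ℂ) * Complex.I) ^ (m + 1) with hS
  have hm0 : (m.factorial : ℂ) ≠ 0 := Nat.cast_ne_zero.mpr m.factorial_ne_zero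
  have h2πc : ((2:ℂ) * Real.pi) ≠ 0 := by
    simp only [ne_eq, mul_eq_zero, not_or]
    constructor
    · norm_num
    · exact_mod_cast hπ.ne'
  have hfinal : (m.factorial : ℂ) / (2 * Real.pi * Complex.I) * (S * Complex.I)
      = Complex.exp ((t:ℂ) * (c:ℂ)) * pf c m t := by
    rw [e1, real_smul, Complex.exp_neg]
    push_cast
    field_simp
  rw [hfinal]
  by_cases ht : 0 ≤ t
  · rw [if_pos ht, pf_pos c m ht, ← mul_assoc, mul_comm (Complex.exp _), mul_assoc,
      ← Complex.exp_add]
    have : (t:ℂ) * (c:ℂ) + -((c:ℂ) * (t:ℂ)) = 0 := by ring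
    rw [this, Complex.exp_zero, mul_one]
  · rw [if_neg ht, pf_zero c m hm (le_of_not_ge ht), mul_zero]
end

section
/- There is an absolute constant C > 0 such that for every integer q ≥ 16^16 and every real δ with 0 ≤ δ < 1, Σ_{p | q} 1/p^{1−δ} ≤ C·(log q)^{δ}·log log log q, where the sum runs over the prime divisors p of q. -/
open Finset Real

lemma thetaBound (n : ℕ) :
    ∑ p ∈ (Finset.range (n+1)).filter Nat.Prime, Real.log p ≤ n * Real.log 4 := by
  have h1 : ∀ p ∈ (Finset.range (n+1)).filter Nat.Prime, (p:ℝ) ≠ 0 := by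
    intro p hp
    simp only [Finset.mem_filter] at hp
    exact_mod_cast hp.2.pos.ne'
  rw [← Real.log_prod h1]
  have h2 : (∏ p ∈ (Finset.range (n+1)).filter Nat.Prime, (p:ℝ)) = (primorial n : ℝ) := by
    rw [primorial]; push_cast; ring
  rw [h2]
  calc Real.log (primorial n) ≤ Real.log ((4:ℕ)^n : ℕ) := by
        apply Real.log_le_log (by exact_mod_cast primorial_pos n)
        exact_mod_cast primorial_le_4_pow n
    _ = n * Real.log 4 := by push_cast; rw [Real.log_pow]

lemma blockBound (j : ℕ) (hj : 1 ≤ j) :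
    ∑ p ∈ (Finset.Ioc (2^j) (2^(j+1))).filter Nat.Prime, (1:ℝ)/p ≤ 4 / j := by
  have hlog2 : (0:ℝ) < Real.log 2 := Real.log_pos (by norm_num)
  have hjpos : (0:ℝ) < j := by exact_mod_cast hj
  have hc : (0:ℝ) < 2^j * (j * Real.log 2) := by positivity
  have step1 : ∑ p ∈ (Finset.Ioc (2^j) (2^(j+1))).filter Nat.Prime, (1:ℝ)/p ≤
      ∑ p ∈ (Finset.Ioc (2^j) (2^(j+1))).filter Nat.Prime,
        Real.log p / (2^j * (j * Real.log 2)) := by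
    apply Finset.sum_le_sum
    intro p hp
    simp only [Finset.mem_filter, Finset.mem_Ioc] at hp
    have hp1 : (2:ℝ)^j < p := by exact_mod_cast hp.1.1
    have hppos : (0:ℝ) < p := lt_trans (by positivity) hp1
    rw [div_le_div_iff₀ hppos hc, one_mul]
    have hlogp : (j:ℝ) * Real.log 2 ≤ Real.log p := by
      rw [← Real.log_pow]
      apply Real.log_le_log (by positivity)
      exact le_of_lt hp1
    calc (2:ℝ)^j * (j * Real.log 2) ≤ p * (j * Real.log 2) := by
          apply mul_le_mul_of_nonneg_right (le_of_lt hp1) (by positivity)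
      _ ≤ p * Real.log p := mul_le_mul_of_nonneg_left hlogp (le_of_lt hppos)
      _ = Real.log p * p := mul_comm _ _
  have hsum : ∑ p ∈ (Finset.Ioc (2^j) (2^(j+1))).filter Nat.Prime, Real.log p ≤
      2^(j+1) * Real.log 4 := by
    calc ∑ p ∈ (Finset.Ioc (2^j) (2^(j+1))).filter Nat.Prime, Real.log p
        ≤ ∑ p ∈ (Finset.range (2^(j+1)+1)).filter Nat.Prime, Real.log p := by
          apply Finset.sum_le_sum_of_subset_of_nonneg
          · apply Finset.filter_subset_filter
            intro x hx
            simp only [Finset.mem_Ioc] at hx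
            simp only [Finset.mem_range]
            omega
          · intro p hp _
            simp only [Finset.mem_filter] at hp
            exact Real.log_nonneg (by exact_mod_cast hp.2.one_lt.le)
      _ ≤ (2^(j+1) : ℕ) * Real.log 4 := thetaBound _
      _ = 2^(j+1) * Real.log 4 := by push_cast; ring
  have step2 : ∑ p ∈ (Finset.Ioc (2^j) (2^(j+1))).filter Nat.Prime,
        Real.log p / (2^j * (j * Real.log 2)) ≤
      (2^(j+1) * Real.log 4) / (2^j * (j * Real.log 2)) := by
    rw [← Finset.sum_div]
    gcongr
  refine (step1.trans step2).trans (le_of_eq ?_)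
  have h4 : Real.log 4 = 2 * Real.log 2 := by
    rw [show (4:ℝ) = 2^2 by norm_num, Real.log_pow]; push_cast; ring
  rw [h4, pow_succ]
  field_simp
  ring

lemma mertens (N : ℕ) (hN : 16 ≤ N) :
    ∑ p ∈ (Finset.range (N+1)).filter Nat.Prime, (1:ℝ)/p ≤ 7 + 4 * Real.log (Real.log N) := by
  set J := Nat.log 2 N with hJ
  have hJ4 : 4 ≤ J := by
    calc 4 = Nat.log 2 16 := (Nat.log_eq_of_pow_le_of_lt_pow (by norm_num) (by norm_num)).symm
      _ ≤ J := Nat.log_mono_right hN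
  set S := (Finset.range (N+1)).filter Nat.Prime with hS
  have h2S : 2 ∈ S := by
    simp only [hS, Finset.mem_filter, Finset.mem_range]
    exact ⟨by omega, Nat.prime_two⟩
  set B : ℕ → Finset ℕ := fun j => (Finset.Ioc (2^j) (2^(j+1))).filter Nat.Prime with hB
  -- subset of biUnion
  have hsub : S.erase 2 ⊆ (Finset.Icc 1 J).biUnion B := by
    intro p hp
    simp only [Finset.mem_erase, hS, Finset.mem_filter, Finset.mem_range] at hp
    obtain ⟨hp2, hpN, hpp⟩ := hp
    have hp3 : 3 ≤ p := by
      rcases hpp.two_le.lt_or_eq with h | h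
      · omega
      · omega
    set j := Nat.log 2 (p-1) with hj
    have h1 : 2^j ≤ p - 1 := Nat.pow_log_le_self 2 (by omega)
    have h2 : p - 1 < 2^(j+1) := Nat.lt_pow_succ_log_self (by norm_num) _
    refine Finset.mem_biUnion.mpr ⟨j, ?_, ?_⟩
    · simp only [Finset.mem_Icc]
      constructor
      · have : 0 < j := Nat.log_pos one_lt_two (by omega)
        omega
      · exact Nat.log_mono_right (by omega)
    · simp only [hB, Finset.mem_filter, Finset.mem_Ioc]
      exact ⟨⟨by omega, by omega⟩, hpp⟩
  -- pairwise disjoint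
  have hdisj : (↑(Finset.Icc 1 J) : Set ℕ).PairwiseDisjoint B := by
    intro i _ j _ hij
    apply Finset.disjoint_left.mpr
    intro x hxi hxj
    simp only [hB, Finset.mem_filter, Finset.mem_Ioc] at hxi hxj
    rcases lt_or_gt_of_ne hij with h | h
    · have : 2^(i+1) ≤ 2^j := Nat.pow_le_pow_right (by norm_num) (by omega)
      omega
    · have : 2^(j+1) ≤ 2^i := Nat.pow_le_pow_right (by norm_num) (by omega)
      omega
  -- main chain
  have key : ∑ p ∈ S, (1:ℝ)/p = 1/2 + ∑ p ∈ S.erase 2, (1:ℝ)/p := by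
    rw [← Finset.add_sum_erase _ _ h2S]; norm_num
  have step : ∑ p ∈ S.erase 2, (1:ℝ)/p ≤ ∑ j ∈ Finset.Icc 1 J, (4:ℝ)/j := by
    calc ∑ p ∈ S.erase 2, (1:ℝ)/p ≤ ∑ p ∈ (Finset.Icc 1 J).biUnion B, (1:ℝ)/p := by
          apply Finset.sum_le_sum_of_subset_of_nonneg hsub
          intro p _ _; positivity
      _ = ∑ j ∈ Finset.Icc 1 J, ∑ p ∈ B j, (1:ℝ)/p := Finset.sum_biUnion hdisj
      _ ≤ ∑ j ∈ Finset.Icc 1 J, (4:ℝ)/j := by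
          apply Finset.sum_le_sum
          intro j hj
          simp only [Finset.mem_Icc] at hj
          exact blockBound j hj.1
  have harm : ∑ j ∈ Finset.Icc 1 J, (4:ℝ)/j ≤ 4 * (1 + Real.log J) := by
    have : ∑ j ∈ Finset.Icc 1 J, (1:ℝ)/j = (harmonic J : ℝ) := by
      rw [harmonic]
      push_cast
      rw [show Finset.Icc 1 J = Finset.Ico 1 (J+1) by rfl, Finset.sum_Ico_eq_sum_range]
      apply Finset.sum_congr (by norm_num)
      intro i _
      rw [one_div, add_comm]
      norm_num
    calc ∑ j ∈ Finset.Icc 1 J, (4:ℝ)/j = 4 * ∑ j ∈ Finset.Icc 1 J, (1:ℝ)/j := by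
          rw [Finset.mul_sum]; apply Finset.sum_congr rfl; intros; ring
      _ = 4 * (harmonic J : ℝ) := by rw [this]
      _ ≤ 4 * (1 + Real.log J) := by
          have := harmonic_le_one_add_log J
          linarith
  -- bound log J
  have hlog2 : (0.6931471803:ℝ) < Real.log 2 := Real.log_two_gt_d9
  have hlogN : (2:ℝ) ≤ Real.log N := by
    calc (2:ℝ) ≤ 4 * 0.6931471803 := by norm_num
      _ ≤ 4 * Real.log 2 := by linarith
      _ = Real.log 16 := by
          rw [show (16:ℝ) = 2^(4:ℕ) by norm_num, Real.log_pow]; push_cast; ring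
      _ ≤ Real.log N := Real.log_le_log (by norm_num) (by exact_mod_cast hN)
  have hJle : (J:ℝ) ≤ Real.log N / Real.log 2 := by
    have h2J : (2:ℝ)^J ≤ N := by exact_mod_cast Nat.pow_log_le_self 2 (by omega : N ≠ 0)
    rw [le_div_iff₀ (by linarith)]
    calc (J:ℝ) * Real.log 2 = Real.log ((2:ℝ)^J) := by rw [Real.log_pow]
      _ ≤ Real.log N := Real.log_le_log (by positivity) h2J
  have hlogJ : Real.log J ≤ Real.log (Real.log N) + 0.45 := by
    have hJpos : (0:ℝ) < J := by exact_mod_cast (by omega : 0 < J)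
    calc Real.log J ≤ Real.log (Real.log N / Real.log 2) := by
          apply Real.log_le_log hJpos hJle
      _ = Real.log (Real.log N) - Real.log (Real.log 2) := by
          rw [Real.log_div (by linarith) (by linarith)]
      _ ≤ Real.log (Real.log N) + 0.45 := by
          have h1 : Real.log (Real.log 2)⁻¹ ≤ (Real.log 2)⁻¹ - 1 :=
            Real.log_le_sub_one_of_pos (by positivity)
          rw [Real.log_inv] at h1
          have h2 : (Real.log 2)⁻¹ ≤ 1.45 := by
            rw [inv_le_comm₀ (by linarith) (by norm_num)]
            linarith
          linarith
  calc ∑ p ∈ S, (1:ℝ)/p = 1/2 + ∑ p ∈ S.erase 2, (1:ℝ)/p := key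
    _ ≤ 1/2 + 4 * (1 + Real.log J) := by linarith [step.trans harm]
    _ ≤ 7 + 4 * Real.log (Real.log N) := by linarith

/-- Lemma 2 of the paper, second bound:
`Σ_{p ∣ q} 1/p^{1-δ} ≪ (log q)^δ · log log log q` uniformly in `q` and `δ`. -/
theorem stmt4 :
    ∃ C : ℝ, 0 < C ∧ ∀ q : ℕ, 16 ^ 16 ≤ q → ∀ δ : ℝ, 0 ≤ δ → δ < 1 →
      ∑ p ∈ q.primeFactors, 1 / (p : ℝ) ^ (1 - δ) ≤
        C * Real.log q ^ δ * Real.log (Real.log (Real.log q)) := by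
  refine ⟨13, by norm_num, ?_⟩
  intro q hq δ hδ0 hδ1
  have hlog2 : (0.6931471803:ℝ) < Real.log 2 := Real.log_two_gt_d9
  have hlog2' : Real.log 2 < 0.6931471808 := Real.log_two_lt_d9
  have hq0 : 0 < q := lt_of_lt_of_le (by norm_num) hq
  have hq1 : (1:ℝ) < q := by
    have : (16:ℝ)^16 ≤ q := by exact_mod_cast hq
    nlinarith [this]
  set T := Real.log q with hTdef
  have hlog16 : Real.log (16:ℝ) = 4 * Real.log 2 := by
    rw [show (16:ℝ) = 2^(4:ℕ) by norm_num, Real.log_pow]; push_cast; ring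
  have hT44 : (44:ℝ) ≤ T := by
    have h1 : Real.log ((16:ℝ)^(16:ℕ)) ≤ T := by
      apply Real.log_le_log (by positivity)
      exact_mod_cast hq
    rw [Real.log_pow, hlog16] at h1
    push_cast at h1
    linarith
  have hTpos : (0:ℝ) < T := by linarith
  have hlogT : (3.46:ℝ) ≤ Real.log T := by
    have h32 : Real.log (32:ℝ) ≤ Real.log T := by
      apply Real.log_le_log (by norm_num)
      linarith
    have : Real.log (32:ℝ) = 5 * Real.log 2 := by
      rw [show (32:ℝ) = 2^(5:ℕ) by norm_num, Real.log_pow]; push_cast; ring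
    linarith
  have hL1 : 1 ≤ Real.log (Real.log T) := by
    have he : Real.exp 1 < 2.7182818286 := Real.exp_one_lt_d9
    calc (1:ℝ) = Real.log (Real.exp 1) := (Real.log_exp 1).symm
      _ ≤ Real.log (Real.log T) := Real.log_le_log (Real.exp_pos 1) (by linarith)
  set L := Real.log (Real.log T) with hLdef
  -- card bound
  have h2card : 2^(q.primeFactors.card) ≤ q := by
    calc 2^(q.primeFactors.card) ≤ ∏ p ∈ q.primeFactors, p := by
          apply Finset.pow_card_le_prod
          intro p hp
          exact (Nat.prime_of_mem_primeFactors hp).two_le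
      _ ≤ q := Nat.le_of_dvd hq0 (Nat.prod_primeFactors_dvd q)
  have hcard : (q.primeFactors.card : ℝ) ≤ T / Real.log 2 := by
    rw [le_div_iff₀ (by linarith)]
    calc (q.primeFactors.card : ℝ) * Real.log 2 = Real.log ((2:ℝ)^(q.primeFactors.card)) := by
          rw [Real.log_pow]
      _ ≤ T := Real.log_le_log (by positivity) (by exact_mod_cast h2card)
  -- split
  set Ps := q.primeFactors.filter (fun p : ℕ => (p:ℝ) ≤ T) with hPs
  set Pl := q.primeFactors.filter (fun p : ℕ => ¬ (p:ℝ) ≤ T) with hPl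
  have hsplit : ∑ p ∈ q.primeFactors, 1 / (p : ℝ) ^ (1 - δ)
      = ∑ p ∈ Ps, 1 / (p : ℝ) ^ (1 - δ) + ∑ p ∈ Pl, 1 / (p : ℝ) ^ (1 - δ) :=
    (Finset.sum_filter_add_sum_filter_not _ _ _).symm
  have hTδ : (0:ℝ) < T ^ δ := Real.rpow_pos_of_pos hTpos δ
  -- small part
  set N := ⌊T⌋₊ with hNdef
  have hN16 : 16 ≤ N := Nat.le_floor (by push_cast; linarith)
  have hNT : (N:ℝ) ≤ T := Nat.floor_le hTpos.le
  have hNpos : (1:ℝ) < N := by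
    have : (16:ℕ) ≤ N := hN16
    have : (16:ℝ) ≤ N := by exact_mod_cast this
    linarith
  have hloglogN : Real.log (Real.log N) ≤ L := by
    apply Real.log_le_log (Real.log_pos hNpos)
    exact Real.log_le_log (by linarith) hNT
  have hsmall : ∑ p ∈ Ps, 1 / (p : ℝ) ^ (1 - δ) ≤ T ^ δ * (7 + 4 * L) := by
    have step1 : ∑ p ∈ Ps, 1 / (p : ℝ) ^ (1 - δ) ≤ ∑ p ∈ Ps, T ^ δ * (1/p) := by
      apply Finset.sum_le_sum
      intro p hp
      simp only [hPs, Finset.mem_filter] at hp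
      have hp2 : 2 ≤ p := (Nat.prime_of_mem_primeFactors hp.1).two_le
      have hppos : (0:ℝ) < p := by exact_mod_cast lt_of_lt_of_le (by norm_num) hp2
      have heq : (1:ℝ) / (p:ℝ) ^ (1 - δ) = (p:ℝ)^δ / p := by
        rw [Real.rpow_sub hppos, Real.rpow_one, one_div_div]
      rw [heq]
      have hpT : (p:ℝ)^δ ≤ T^δ := Real.rpow_le_rpow hppos.le hp.2 hδ0
      rw [mul_one_div]
      gcongr
    have step2 : ∑ p ∈ Ps, (1:ℝ)/p ≤ 7 + 4 * Real.log (Real.log N) := by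
      refine le_trans ?_ (mertens N hN16)
      apply Finset.sum_le_sum_of_subset_of_nonneg
      · intro p hp
        simp only [hPs, Finset.mem_filter] at hp
        simp only [Finset.mem_filter, Finset.mem_range]
        refine ⟨?_, Nat.prime_of_mem_primeFactors hp.1⟩
        have : p ≤ N := Nat.le_floor hp.2
        omega
      · intro p _ _; positivity
    calc ∑ p ∈ Ps, 1 / (p : ℝ) ^ (1 - δ) ≤ ∑ p ∈ Ps, T ^ δ * (1/p) := step1
      _ = T ^ δ * ∑ p ∈ Ps, (1:ℝ)/p := by rw [Finset.mul_sum]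
      _ ≤ T ^ δ * (7 + 4 * Real.log (Real.log N)) := by
          apply mul_le_mul_of_nonneg_left step2 hTδ.le
      _ ≤ T ^ δ * (7 + 4 * L) := by
          apply mul_le_mul_of_nonneg_left (by linarith) hTδ.le
  -- large part
  have hlarge : ∑ p ∈ Pl, 1 / (p : ℝ) ^ (1 - δ) ≤ 1.5 * T ^ δ := by
    have step1 : ∑ p ∈ Pl, 1 / (p : ℝ) ^ (1 - δ) ≤ (Pl.card : ℝ) * (T^δ / T) := by
      rw [← nsmul_eq_mul]
      apply Finset.sum_le_card_nsmul
      intro p hp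
      simp only [hPl, Finset.mem_filter, not_le] at hp
      have hpT : T < (p:ℝ) := hp.2
      have h1 : T^(1-δ) ≤ (p:ℝ)^(1-δ) := Real.rpow_le_rpow hTpos.le hpT.le (by linarith)
      have h2 : (0:ℝ) < T^(1-δ) := Real.rpow_pos_of_pos hTpos _
      have heq : T^δ / T = 1 / T^(1-δ) := by
        rw [Real.rpow_sub hTpos, Real.rpow_one, one_div_div]
      rw [heq]
      apply div_le_div_of_nonneg_left one_pos.le h2 h1
    have hcardPl : (Pl.card : ℝ) ≤ T / Real.log 2 := by
      refine le_trans ?_ hcard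
      exact_mod_cast Finset.card_filter_le _ _
    calc ∑ p ∈ Pl, 1 / (p : ℝ) ^ (1 - δ) ≤ (Pl.card : ℝ) * (T^δ / T) := step1
      _ ≤ (T / Real.log 2) * (T^δ / T) := by
          apply mul_le_mul_of_nonneg_right hcardPl (by positivity)
      _ = T^δ / Real.log 2 := by field_simp
      _ ≤ 1.5 * T ^ δ := by
          rw [div_le_iff₀ (by linarith)]
          nlinarith
  -- combine
  have : ∑ p ∈ q.primeFactors, 1 / (p : ℝ) ^ (1 - δ) ≤ T ^ δ * (8.5 + 4 * L) := by
    rw [hsplit]; linarith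
  refine this.trans ?_
  nlinarith [hTδ, hL1]
end

section
/- Let k ≥ 1 be an integer, A a complex number, and (a_n) a sequence of complex numbers such that Σ_{n ≤ x} a_n = A·(log x)^k / k! + O((log x)^{k−1}) for x ≥ 2. Then for any continuously differentiable function G on [0,1], Σ_{n ≤ x} a_n · G(log(x/n)/log x) = (A·(log x)^k/(k−1)!) · ∫_0^1 (1−t)^{k−1} G(t) dt + O((log x)^{k−1}), where the implied constant depends only on A, k, G, and the implied constant in the hypothesis. -/
open Finset intervalIntegral MeasureTheory

lemma ftc_aux (G : ℝ → ℝ) (hG : ContDiffOn ℝ 1 G (Set.Icc 0 1)) {y : ℝ}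
    (hy : y ∈ Set.Icc (0:ℝ) 1) :
    ∫ t in (0:ℝ)..y, derivWithin G (Set.Icc 0 1) t = G y - G 0 := by
  set g' := derivWithin G (Set.Icc (0:ℝ) 1)
  have hUD : UniqueDiffOn ℝ (Set.Icc (0:ℝ) 1) := uniqueDiffOn_Icc one_pos
  have hg'c : ContinuousOn g' (Set.Icc 0 1) := hG.continuousOn_derivWithin hUD le_rfl
  apply integral_eq_sub_of_hasDeriv_right_of_le hy.1
    (hG.continuousOn.mono (Set.Icc_subset_Icc le_rfl hy.2))
  · intro t ht
    have ht1 : t ∈ Set.Ioo (0:ℝ) 1 := ⟨ht.1, lt_of_lt_of_le ht.2 hy.2⟩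
    have := ((hG.differentiableOn one_ne_zero) t (Set.mem_Icc.2 ⟨ht1.1.le, ht1.2.le⟩)).hasDerivWithinAt
    exact ((this.hasDerivAt (Icc_mem_nhds ht1.1 ht1.2)).hasDerivWithinAt)
  · exact (hg'c.mono (by rw [Set.uIcc_of_le hy.1]; exact Set.Icc_subset_Icc le_rfl hy.2)).intervalIntegrable

lemma ibp_aux (k : ℕ) (hk : 1 ≤ k) (G : ℝ → ℝ) (hG : ContDiffOn ℝ 1 G (Set.Icc 0 1)) :
    ∫ t in (0:ℝ)..1, (1 - t) ^ k * derivWithin G (Set.Icc 0 1) t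
      = k * (∫ t in (0:ℝ)..1, (1 - t) ^ (k-1) * G t) - G 0 := by
  set g' := derivWithin G (Set.Icc (0:ℝ) 1) with hg'
  have hUD : UniqueDiffOn ℝ (Set.Icc (0:ℝ) 1) := uniqueDiffOn_Icc one_pos
  have hg'c : ContinuousOn g' (Set.Icc 0 1) := hG.continuousOn_derivWithin hUD le_rfl
  have hGc : ContinuousOn G (Set.Icc 0 1) := hG.continuousOn
  have huicc : Set.uIcc (0:ℝ) 1 = Set.Icc 0 1 := Set.uIcc_of_le zero_le_one
  have hint1 : IntervalIntegrable (fun t => (1-t)^k * g' t) volume 0 1 := by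
    apply ContinuousOn.intervalIntegrable
    rw [huicc]
    exact (Continuous.continuousOn (by continuity)).mul hg'c
  have hint2 : IntervalIntegrable (fun t => (k:ℝ) * ((1-t)^(k-1) * G t)) volume 0 1 := by
    apply ContinuousOn.intervalIntegrable
    rw [huicc]
    exact (continuousOn_const.mul ((Continuous.continuousOn (by continuity)).mul hGc))
  have key : ∫ t in (0:ℝ)..1, ((1-t)^k * g' t - (k:ℝ) * ((1-t)^(k-1) * G t))
      = (fun t : ℝ => (1-t)^k * G t) 1 - (fun t : ℝ => (1-t)^k * G t) 0 := by
    apply integral_eq_sub_of_hasDeriv_right_of_le (f := fun t : ℝ => (1-t)^k * G t)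
      (f' := fun t : ℝ => (1-t)^k * g' t - (k:ℝ) * ((1-t)^(k-1) * G t)) zero_le_one
    · exact (Continuous.continuousOn (by continuity)).mul hGc
    · intro t ht
      have hGd : HasDerivAt G (g' t) t := by
        have := ((hG.differentiableOn one_ne_zero) t (Set.mem_Icc.2 ⟨ht.1.le, ht.2.le⟩)).hasDerivWithinAt
        exact this.hasDerivAt (Icc_mem_nhds ht.1 ht.2)
      have hpd : HasDerivAt (fun t : ℝ => (1-t)^k) ((k:ℝ) * (1-t)^(k-1) * (-1)) t := by
        exact (((hasDerivAt_id t).const_sub 1).pow k)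
      have := hpd.mul hGd
      convert this.hasDerivWithinAt using 1
      · funext s; simp only [Pi.mul_apply]
      · ring
    · exact hint1.sub hint2
  rw [intervalIntegral.integral_sub hint1 hint2, intervalIntegral.integral_const_mul] at key
  simp only [sub_self, zero_pow (by omega : k ≠ 0), zero_mul, sub_zero, one_pow, one_mul] at key
  linarith [key]

set_option maxHeartbeats 2000000 in
/-- Lemma 5 of the paper (Lemma 4 of Goldston–Pintz–Yıldırım): weighted partial
summation against a `C¹` weight `G`. -/
theorem stmt6 (k : ℕ) (hk : 1 ≤ k) (A : ℂ) (a : ℕ → ℂ) (C₀ : ℝ)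
    (ha : ∀ x : ℝ, 2 ≤ x →
      ‖(∑ n ∈ Finset.Icc 1 ⌊x⌋₊, a n) - A * (Real.log x) ^ k / (k.factorial : ℂ)‖ ≤
        C₀ * Real.log x ^ (k - 1))
    (G : ℝ → ℝ) (hG : ContDiffOn ℝ 1 G (Set.Icc 0 1)) :
    ∃ C : ℝ, 0 < C ∧ ∀ x : ℝ, 2 ≤ x →
      ‖(∑ n ∈ Finset.Icc 1 ⌊x⌋₊,
            a n * (G (Real.log (x / n) / Real.log x) : ℂ)) -
          A * (Real.log x) ^ k / ((k - 1).factorial : ℂ) *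
            ((∫ t in (0:ℝ)..1, (1 - t) ^ (k - 1) * G t : ℝ) : ℂ)‖ ≤
        C * Real.log x ^ (k - 1) := by
  classical
  have hUD : UniqueDiffOn ℝ (Set.Icc (0:ℝ) 1) := uniqueDiffOn_Icc one_pos
  set g' := derivWithin G (Set.Icc (0:ℝ) 1) with hg'def
  have hg'c : ContinuousOn g' (Set.Icc 0 1) := hG.continuousOn_derivWithin hUD le_rfl
  obtain ⟨M0, hM0⟩ := (isCompact_Icc).exists_bound_of_continuousOn hg'c
  set M := max M0 0 with hM
  have hMnn : (0:ℝ) ≤ M := le_max_right _ _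
  have hMb : ∀ t ∈ Set.Icc (0:ℝ) 1, |g' t| ≤ M :=
    fun t ht => le_trans (by simpa using hM0 t ht) (le_max_left _ _)
  have hl2 : (0:ℝ) < Real.log 2 := Real.log_pos one_lt_two
  have hC₀ : 0 ≤ C₀ := by
    have h1 := le_trans (norm_nonneg _) (ha 2 le_rfl)
    nlinarith [pow_pos hl2 (k-1)]
  set B : ℝ := (‖a 1‖ + ‖A‖ * Real.log 2 ^ k / (k.factorial : ℝ)) / Real.log 2 ^ (k-1) with hB
  have hBnn : 0 ≤ B := by positivity
  set C₁ : ℝ := C₀ + B with hC₁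
  have hC₁nn : 0 ≤ C₁ := by positivity
  refine ⟨|G 0| * C₀ + M * C₁ + 1, by positivity, fun x hx => ?_⟩
  have hx0 : (0:ℝ) < x := by linarith
  have hx1 : (1:ℝ) ≤ x := by linarith
  set L := Real.log x with hLdef
  have hL2 : Real.log 2 ≤ L := Real.log_le_log (by norm_num) hx
  have hL0 : 0 < L := lt_of_lt_of_le hl2 hL2
  set N := ⌊x⌋₊ with hN
  set Sf : ℝ → ℂ := fun y => ∑ n ∈ Finset.Icc 1 ⌊y⌋₊, a n with hSf
  -- pointwise bound on partial sums
  have hbound : ∀ y : ℝ, 1 ≤ y → Real.log y ≤ L →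
      ‖Sf y - A * ((Real.log y : ℂ)) ^ k / (k.factorial : ℂ)‖ ≤ C₁ * L ^ (k-1) := by
    intro y hy1 hyL
    have hlogy0 : 0 ≤ Real.log y := Real.log_nonneg hy1
    by_cases hy2 : 2 ≤ y
    · calc ‖Sf y - A * ((Real.log y : ℂ)) ^ k / (k.factorial : ℂ)‖
          ≤ C₀ * Real.log y ^ (k-1) := ha y hy2
        _ ≤ C₀ * L ^ (k-1) :=
            mul_le_mul_of_nonneg_left (pow_le_pow_left₀ hlogy0 hyL _) hC₀
        _ ≤ C₁ * L ^ (k-1) :=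
            mul_le_mul_of_nonneg_right (by simp [hC₁, hBnn]) (pow_nonneg hL0.le _)
    · push_neg at hy2
      have hfl : ⌊y⌋₊ = 1 := by
        rw [Nat.floor_eq_iff (by linarith : (0:ℝ) ≤ y)]
        norm_num
        exact ⟨hy1, hy2⟩
      have hSfy : Sf y = a 1 := by simp [hSf, hfl]
      have hlogy2 : Real.log y ≤ Real.log 2 := Real.log_le_log (by linarith) hy2.le
      have hnorm2 : ‖A * ((Real.log y : ℂ)) ^ k / (k.factorial : ℂ)‖
          ≤ ‖A‖ * Real.log 2 ^ k / (k.factorial : ℝ) := by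
        rw [norm_div, norm_mul, norm_pow, Complex.norm_real, Complex.norm_natCast]
        have h1 : ‖Real.log y‖ ≤ Real.log 2 := by
          rw [Real.norm_eq_abs, abs_of_nonneg hlogy0]; exact hlogy2
        gcongr
      have hfact : ‖Sf y - A * ((Real.log y : ℂ)) ^ k / (k.factorial : ℂ)‖
          ≤ B * Real.log 2 ^ (k-1) := by
        rw [hSfy, hB, div_mul_cancel₀ _ (by positivity : Real.log 2 ^ (k-1) ≠ 0)]
        calc ‖a 1 - A * ((Real.log y : ℂ)) ^ k / (k.factorial : ℂ)‖
            ≤ ‖a 1‖ + ‖A * ((Real.log y : ℂ)) ^ k / (k.factorial : ℂ)‖ := norm_sub_le _ _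
          _ ≤ _ := by linarith
      calc _ ≤ B * Real.log 2 ^ (k-1) := hfact
        _ ≤ B * L ^ (k-1) :=
            mul_le_mul_of_nonneg_left (pow_le_pow_left₀ hl2.le hL2 _) hBnn
        _ ≤ C₁ * L ^ (k-1) := by
            have := pow_nonneg hL0.le (k-1)
            nlinarith
  -- ℓ n ∈ [0,1]
  have hℓmem : ∀ n ∈ Finset.Icc 1 N, Real.log (x / n) / L ∈ Set.Icc (0:ℝ) 1 := by
    intro n hn
    rw [Finset.mem_Icc] at hn
    have hn1 : (1:ℝ) ≤ (n:ℝ) := by exact_mod_cast hn.1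
    have hnx : (n:ℝ) ≤ x := (Nat.le_floor_iff hx0.le).mp hn.2
    have hn0 : (0:ℝ) < (n:ℝ) := by linarith
    constructor
    · exact div_nonneg (Real.log_nonneg ((one_le_div hn0).2 hnx)) hL0.le
    · rw [div_le_one hL0, Real.log_div (by positivity) (by positivity)]
      have := Real.log_nonneg hn1
      linarith
  -- indicator functions
  set f : ℕ → ℝ → ℂ := fun n t =>
    Set.indicator {s : ℝ | s ≤ Real.log (x / n) / L} (fun s => a n * (g' s : ℂ)) t with hf
  have hbase : ∀ n : ℕ, IntervalIntegrable (fun s => a n * (g' s : ℂ)) volume 0 1 := by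
    intro n
    apply ContinuousOn.intervalIntegrable
    rw [Set.uIcc_of_le zero_le_one]
    exact continuousOn_const.mul (Complex.continuous_ofReal.comp_continuousOn hg'c)
  have hfint : ∀ n : ℕ, IntervalIntegrable (f n) volume 0 1 := by
    intro n
    have h1 := hbase n
    rw [intervalIntegrable_iff] at h1 ⊢
    exact h1.indicator measurableSet_Iic
  have hfi : ∀ n ∈ Finset.Icc 1 N, ∫ t in (0:ℝ)..1, f n t
      = a n * ((G (Real.log (x / n) / L) - G 0 : ℝ) : ℂ) := by
    intro n hn
    have hmem := hℓmem n hn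
    rw [hf]
    rw [intervalIntegral.integral_indicator hmem, intervalIntegral.integral_const_mul,
      intervalIntegral.integral_ofReal, ftc_aux G hG hmem]
  have key : (∑ n ∈ Finset.Icc 1 N, a n * (G (Real.log (x / n) / L) : ℂ))
      = (G 0 : ℂ) * Sf x + ∫ t in (0:ℝ)..1, (∑ n ∈ Finset.Icc 1 N, f n t) := by
    rw [intervalIntegral.integral_finset_sum (fun n _ => hfint n),
      Finset.sum_congr rfl hfi, hSf]
    push_cast
    rw [Finset.mul_sum, ← Finset.sum_add_distrib]
    apply Finset.sum_congr rfl
    intro n hn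
    ring
  have hptwise : ∀ t ∈ Set.Icc (0:ℝ) 1,
      (∑ n ∈ Finset.Icc 1 N, f n t) = (g' t : ℂ) * Sf (x ^ (1-t)) := by
    intro t ht
    have hxt : x ^ (1-t) ≤ x := by
      nth_rewrite 2 [← Real.rpow_one x]
      exact Real.rpow_le_rpow_of_exponent_le hx1 (by linarith [ht.1])
    have hset : Finset.Icc 1 ⌊x ^ (1-t)⌋₊
        = (Finset.Icc 1 N).filter (fun n : ℕ => t ≤ Real.log (x / (n:ℝ)) / L) := by
      ext n
      simp only [Finset.mem_filter, Finset.mem_Icc]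
      constructor
      · rintro ⟨h1, h2⟩
        have hn0 : (0:ℝ) < n := by exact_mod_cast Nat.lt_of_lt_of_le Nat.zero_lt_one h1
        have hnle : (n:ℝ) ≤ x ^ (1-t) := (Nat.le_floor_iff (Real.rpow_nonneg hx0.le _)).1 h2
        have hlog : Real.log n ≤ (1-t) * L := (Real.le_rpow_iff_log_le hn0 hx0).1 hnle
        refine ⟨⟨h1, Nat.le_floor (le_trans hnle hxt)⟩, ?_⟩
        rw [le_div_iff₀ hL0, Real.log_div (ne_of_gt hx0) (ne_of_gt hn0)]
        linarith
      · rintro ⟨⟨h1, h2⟩, h3⟩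
        have hn0 : (0:ℝ) < n := by exact_mod_cast Nat.lt_of_lt_of_le Nat.zero_lt_one h1
        rw [le_div_iff₀ hL0, Real.log_div (ne_of_gt hx0) (ne_of_gt hn0)] at h3
        refine ⟨h1, Nat.le_floor ?_⟩
        rw [Real.le_rpow_iff_log_le hn0 hx0]
        linarith
    calc ∑ n ∈ Finset.Icc 1 N, f n t
        = ∑ n ∈ Finset.Icc 1 N,
            if t ≤ Real.log (x / n) / L then a n * (g' t:ℂ) else 0 := by
          refine Finset.sum_congr rfl fun n _ => ?_
          rw [hf]
          simp [Set.indicator_apply]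
      _ = ∑ n ∈ (Finset.Icc 1 N).filter (fun n : ℕ => t ≤ Real.log (x / (n:ℝ)) / L),
            a n * (g' t:ℂ) := (Finset.sum_filter _ _).symm
      _ = (g' t:ℂ) * Sf (x ^ (1-t)) := by
          simp only [hSf]
          rw [hset, Finset.mul_sum]
          exact Finset.sum_congr rfl fun n _ => mul_comm _ _
  set mainC : ℝ → ℂ := fun t =>
    A * (L:ℂ)^k / (k.factorial:ℂ) * (((1 - t)^k * g' t : ℝ) : ℂ) with hmainC
  have hmint : IntervalIntegrable mainC volume 0 1 := by
    apply ContinuousOn.intervalIntegrable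
    rw [Set.uIcc_of_le zero_le_one]
    exact continuousOn_const.mul (Complex.continuous_ofReal.comp_continuousOn
      (((continuous_const.sub continuous_id).pow k).continuousOn.mul hg'c))
  have hsumint : IntervalIntegrable (fun t => ∑ n ∈ Finset.Icc 1 N, f n t) volume 0 1 := by
    have h := IntervalIntegrable.sum (μ := volume) (a := (0:ℝ)) (b := (1:ℝ))
      (Finset.Icc 1 N) (fun n _ => hfint n)
    simpa [Finset.sum_fn] using h
  have hDb : ∀ t ∈ Set.uIoc (0:ℝ) 1,
      ‖(∑ n ∈ Finset.Icc 1 N, f n t) - mainC t‖ ≤ M * (C₁ * L ^ (k-1)) := by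
    intro t ht'
    rw [Set.uIoc_of_le zero_le_one] at ht'
    have ht : t ∈ Set.Icc (0:ℝ) 1 := ⟨ht'.1.le, ht'.2⟩
    rw [hptwise t ht]
    have hy1 : (1:ℝ) ≤ x ^ (1-t) := by
      calc (1:ℝ) = x ^ (0:ℝ) := (Real.rpow_zero x).symm
        _ ≤ x ^ (1-t) := Real.rpow_le_rpow_of_exponent_le hx1 (by linarith [ht.2])
    have hylog : Real.log (x ^ (1-t)) = (1-t) * L := Real.log_rpow hx0 _
    have hyL : Real.log (x ^ (1-t)) ≤ L := by
      rw [hylog]; nlinarith [ht.1, ht.2, hL0]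
    have hmc : mainC t = (g' t : ℂ) * (A * ((Real.log (x ^ (1-t)) : ℂ)) ^ k / (k.factorial:ℂ)) := by
      rw [hmainC, hylog]
      push_cast [mul_pow]
      ring
    rw [hmc, ← mul_sub, norm_mul, Complex.norm_real]
    exact mul_le_mul (hMb t ht) (hbound _ hy1 hyL) (norm_nonneg _) hMnn
  have hdiff : ‖(∫ t in (0:ℝ)..1, (∑ n ∈ Finset.Icc 1 N, f n t)) - ∫ t in (0:ℝ)..1, mainC t‖
      ≤ M * (C₁ * L ^ (k-1)) := by
    rw [← intervalIntegral.integral_sub hsumint hmint]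
    have := intervalIntegral.norm_integral_le_of_norm_le_const hDb
    simpa using this
  have hmval : (∫ t in (0:ℝ)..1, mainC t)
      = A * (L:ℂ)^k / (k.factorial:ℂ) *
        ((k:ℂ) * ((∫ t in (0:ℝ)..1, (1-t)^(k-1) * G t : ℝ) : ℂ) - (G 0 : ℂ)) := by
    rw [hmainC]
    rw [intervalIntegral.integral_const_mul, intervalIntegral.integral_ofReal,
      ibp_aux k hk G hG]
    push_cast
    ring
  have hdecomp : (∑ n ∈ Finset.Icc 1 N, a n * (G (Real.log (x / n) / L) : ℂ))
        - A * (L:ℂ)^k / ((k-1).factorial : ℂ) *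
          ((∫ t in (0:ℝ)..1, (1-t)^(k-1) * G t : ℝ) : ℂ)
      = (G 0 : ℂ) * (Sf x - A * (L:ℂ)^k / (k.factorial:ℂ))
        + ((∫ t in (0:ℝ)..1, (∑ n ∈ Finset.Icc 1 N, f n t)) - ∫ t in (0:ℝ)..1, mainC t) := by
    rw [key, hmval]
    have hkfac : (k.factorial : ℂ) = (k:ℂ) * ((k-1).factorial : ℂ) := by
      exact_mod_cast (Nat.mul_factorial_pred (by omega)).symm
    have h1 : ((k-1).factorial : ℂ) ≠ 0 := by exact_mod_cast (Nat.factorial_pos _).ne'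
    have h2 : (k:ℂ) ≠ 0 := by exact_mod_cast (by omega : k ≠ 0)
    rw [hkfac]
    field_simp
    ring
  have hfirst : ‖(G 0 : ℂ) * (Sf x - A * (L:ℂ)^k / (k.factorial:ℂ))‖
      ≤ |G 0| * (C₀ * L ^ (k-1)) := by
    rw [norm_mul, Complex.norm_real]
    exact mul_le_mul_of_nonneg_left (ha x hx) (abs_nonneg _)
  calc ‖(∑ n ∈ Finset.Icc 1 N, a n * (G (Real.log (x / n) / L) : ℂ)) -
          A * (L:ℂ) ^ k / ((k - 1).factorial : ℂ) *
            ((∫ t in (0:ℝ)..1, (1 - t) ^ (k - 1) * G t : ℝ) : ℂ)‖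
      = ‖(G 0 : ℂ) * (Sf x - A * (L:ℂ)^k / (k.factorial:ℂ))
        + ((∫ t in (0:ℝ)..1, (∑ n ∈ Finset.Icc 1 N, f n t)) - ∫ t in (0:ℝ)..1, mainC t)‖ := by
        rw [hdecomp]
    _ ≤ ‖(G 0 : ℂ) * (Sf x - A * (L:ℂ)^k / (k.factorial:ℂ))‖
        + ‖(∫ t in (0:ℝ)..1, (∑ n ∈ Finset.Icc 1 N, f n t)) - ∫ t in (0:ℝ)..1, mainC t‖ :=
        norm_add_le _ _
    _ ≤ |G 0| * (C₀ * L ^ (k-1)) + M * (C₁ * L ^ (k-1)) := add_le_add hfirst hdiff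
    _ ≤ (|G 0| * C₀ + M * C₁ + 1) * L ^ (k-1) := by
        nlinarith [pow_nonneg hL0.le (k-1), abs_nonneg (G 0)]
end

section
/- Let k be an integer, θ > 0, and let g : ℕ → ℝ be a multiplicative function supported on squarefree numbers such that g(p) = k/p + O(p^{-1-θ}) for all primes p (outside the divisors of a modulus q). Then for every δ with 0 < δ < min(θ, 1/2) there is a constant B (independent of q) such that for all complex s with Re(s) ≥ −δ, the infinite product Π_{p ∤ q} (1 + g(p)/p^s)(1 − 1/p^{s+1})^k converges absolutely and its modulus is at most B, uniformly in q and in s with Re(s) ≥ −δ. -/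
open scoped Classical

/-- `g` is a multiplicative function supported on squarefree numbers. -/
def MultSF (g : ℕ → ℝ) : Prop :=
  g 1 = 1 ∧ (∀ m n : ℕ, Nat.Coprime m n → g (m * n) = g m * g n) ∧
    ∀ n : ℕ, ¬ Squarefree n → g n = 0

lemma aux_pow_nat (n : ℕ) : ∃ C : ℝ, 0 ≤ C ∧ ∀ v : ℂ, ‖v‖ ≤ 3/4 →
    ‖(1 - v)^n - 1 + n * v‖ ≤ C * ‖v‖^2 := by
  induction n with
  | zero => exact ⟨0, le_refl _, by simp⟩
  | succ n ih =>
    obtain ⟨C, hC0, hC⟩ := ih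
    refine ⟨n + 2*C, by positivity, fun v hv => ?_⟩
    have key : (1 - v)^(n+1) - 1 + ((n+1:ℕ):ℂ) * v
        = (1 - v) * ((1 - v)^n - 1 + n * v) + n * v^2 := by push_cast; ring
    have h1v : ‖(1:ℂ) - v‖ ≤ 2 := by
      calc ‖(1:ℂ) - v‖ ≤ ‖(1:ℂ)‖ + ‖v‖ := norm_sub_le _ _
      _ ≤ 1 + 3/4 := by rw [norm_one]; linarith
      _ ≤ 2 := by norm_num
    rw [key]
    calc ‖(1 - v) * ((1 - v)^n - 1 + (n:ℂ) * v) + (n:ℂ) * v^2‖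
        ≤ ‖(1 - v) * ((1 - v)^n - 1 + (n:ℂ) * v)‖ + ‖(n:ℂ) * v^2‖ := norm_add_le _ _
      _ = ‖(1:ℂ) - v‖ * ‖(1 - v)^n - 1 + (n:ℂ) * v‖ + n * ‖v‖^2 := by
          rw [norm_mul, norm_mul, norm_pow, Complex.norm_natCast]
      _ ≤ 2 * (C * ‖v‖^2) + n * ‖v‖^2 := by
          have hn := hC v hv
          nlinarith [norm_nonneg ((1 - v)^n - 1 + (n:ℂ) * v), sq_nonneg ‖v‖, norm_nonneg v]
      _ = (n + 2*C) * ‖v‖^2 := by ring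

lemma aux_zpow (k : ℤ) : ∃ C : ℝ, 0 ≤ C ∧ ∀ v : ℂ, ‖v‖ ≤ 3/4 →
    ‖(1 - v)^k - 1 + k * v‖ ≤ C * ‖v‖^2 := by
  obtain ⟨n, hn | hn⟩ := k.eq_nat_or_neg
  · obtain ⟨C, hC0, hC⟩ := aux_pow_nat n
    refine ⟨C, hC0, fun v hv => ?_⟩
    have := hC v hv
    rw [hn, zpow_natCast]
    push_cast
    push_cast at this
    exact this
  · obtain ⟨C, hC0, hC⟩ := aux_pow_nat n
    refine ⟨(4:ℝ)^n * (n^2 + C*(1+n)), by positivity, fun v hv => ?_⟩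
    have h1v : (1/4 : ℝ) ≤ ‖(1:ℂ) - v‖ := by
      have := norm_sub_norm_le (1:ℂ) v
      rw [norm_one] at this
      linarith
    have h1vne : (1:ℂ) - v ≠ 0 := by
      intro h; rw [h, norm_zero] at h1v; norm_num at h1v
    set w : ℂ := (1 - v)^n with hw
    have hwne : w ≠ 0 := pow_ne_zero _ h1vne
    have hwlow : ((1:ℝ)/4)^n ≤ ‖w‖ := by
      rw [hw, norm_pow]
      exact pow_le_pow_left₀ (by norm_num) h1v n
    have hwinv : ‖w⁻¹‖ ≤ (4:ℝ)^n := by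
      rw [norm_inv]
      have h4 : (0:ℝ) < ((1:ℝ)/4)^n := by positivity
      have h5 : ‖w‖⁻¹ ≤ (((1:ℝ)/4)^n)⁻¹ :=
        inv_anti₀ h4 hwlow
      calc ‖w‖⁻¹ ≤ (((1:ℝ)/4)^n)⁻¹ := h5
        _ = (4:ℝ)^n := by rw [one_div, inv_pow, inv_inv]
    -- expression
    have hkz : (1 - v)^k = w⁻¹ := by rw [hn, zpow_neg, zpow_natCast]
    have hkc : ((k:ℂ)) = -(n:ℂ) := by rw [hn]; push_cast; ring
    have hkey : (1 - v)^k - 1 + (k:ℂ) * v = w⁻¹ * ((n:ℂ)^2 * v^2 - (w - 1 + n*v) * (1 + n*v)) := by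
      rw [hkz, hkc]
      field_simp
      ring
    have hR := hC v hv
    have h1nv : ‖(1:ℂ) + n*v‖ ≤ 1 + n := by
      calc ‖(1:ℂ) + n*v‖ ≤ ‖(1:ℂ)‖ + ‖(n:ℂ)*v‖ := norm_add_le _ _
        _ = 1 + n * ‖v‖ := by rw [norm_one, norm_mul, Complex.norm_natCast]
        _ ≤ 1 + n * 1 := by
            have : (0:ℝ) ≤ n := Nat.cast_nonneg n
            nlinarith
        _ = 1 + n := by ring
    rw [hkey, norm_mul]
    calc ‖w⁻¹‖ * ‖(n:ℂ)^2 * v^2 - (w - 1 + n*v) * (1 + n*v)‖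
        ≤ (4:ℝ)^n * ((n^2 + C*(1+n)) * ‖v‖^2) := by
          refine mul_le_mul hwinv ?_ (norm_nonneg _) (by positivity)
          calc ‖(n:ℂ)^2 * v^2 - (w - 1 + n*v) * (1 + n*v)‖
              ≤ ‖(n:ℂ)^2 * v^2‖ + ‖(w - 1 + n*v) * (1 + n*v)‖ := norm_sub_le _ _
            _ = (n:ℝ)^2 * ‖v‖^2 + ‖w - 1 + (n:ℂ)*v‖ * ‖(1:ℂ) + n*v‖ := by
                rw [norm_mul, norm_mul, norm_pow, norm_pow, Complex.norm_natCast]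
            _ ≤ (n:ℝ)^2 * ‖v‖^2 + (C * ‖v‖^2) * (1+n) := by
                refine add_le_add le_rfl ?_
                exact mul_le_mul hR h1nv (norm_nonneg _) (by positivity)
            _ = (n^2 + C*(1+n)) * ‖v‖^2 := by ring
      _ = (4:ℝ)^n * (n^2 + C*(1+n)) * ‖v‖^2 := by ring

lemma aux_zpow_lin (k : ℤ) : ∃ C : ℝ, 0 ≤ C ∧ ∀ v : ℂ, ‖v‖ ≤ 3/4 →
    ‖(1 - v)^k - 1‖ ≤ C * ‖v‖ := by
  obtain ⟨C, hC0, hC⟩ := aux_zpow k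
  refine ⟨C + |(k:ℝ)|, by positivity, fun v hv => ?_⟩
  have h1 := hC v hv
  have h2 : ‖(1 - v)^k - 1‖ ≤ ‖(1 - v)^k - 1 + (k:ℂ)*v‖ + ‖(k:ℂ)*v‖ := by
    have h2' := norm_sub_le ((1 - v)^k - 1 + (k:ℂ)*v) ((k:ℂ)*v)
    have heq : (1 - v)^k - 1 + (k:ℂ)*v - (k:ℂ)*v = (1 - v)^k - 1 := by ring
    rw [heq] at h2'
    exact h2'
  have h3 : ‖(k:ℂ)*v‖ = |(k:ℝ)| * ‖v‖ := by
    rw [norm_mul, Complex.norm_intCast]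
  have h4 : ‖v‖^2 ≤ ‖v‖ := by nlinarith [norm_nonneg v]
  calc ‖(1 - v)^k - 1‖ ≤ C * ‖v‖^2 + |(k:ℝ)| * ‖v‖ := by rw [h3] at h2; linarith
    _ ≤ C * ‖v‖ + |(k:ℝ)| * ‖v‖ := by nlinarith
    _ = (C + |(k:ℝ)|) * ‖v‖ := by ring

lemma key_est (k : ℤ) (θ δ Cg : ℝ) (hθ : 0 < θ) (hδ0 : 0 < δ)
    (hδθ : δ < θ) (hδh : δ < 1/2) (hCg : 0 < Cg) :
    ∃ A : ℝ, 0 < A ∧ ∀ p : ℕ, p.Prime → ∀ gp : ℝ, |gp - k / p| ≤ Cg / (p:ℝ)^(1+θ) →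
      ∀ s : ℂ, -δ ≤ s.re →
      ‖(1 + ((gp : ℝ) : ℂ) / ((p:ℕ):ℂ) ^ s) * (1 - 1 / ((p:ℕ):ℂ) ^ (s+1)) ^ k - 1‖
        ≤ A * (p:ℝ) ^ (-(1 + min (θ - δ) (1 - 2*δ))) := by
  obtain ⟨C2, hC20, hC2⟩ := aux_zpow k
  obtain ⟨C1, hC10, hC1⟩ := aux_zpow_lin k
  set ε := min (θ - δ) (1 - 2*δ) with hε
  have hε0 : 0 < ε := lt_min (by linarith) (by linarith)
  have hε1 : ε ≤ θ - δ := min_le_left _ _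
  have hε2 : ε ≤ 1 - 2*δ := min_le_right _ _
  refine ⟨Cg + C2 + (|(k:ℝ)| + Cg) * C1 + 1, by positivity, fun p hp gp hgp s hs => ?_⟩
  set P : ℝ := (p : ℝ) with hPdef
  have hP2 : (2:ℝ) ≤ P := by rw [hPdef]; exact_mod_cast hp.two_le
  have hP1 : (1:ℝ) ≤ P := by linarith
  have hP0 : (0:ℝ) < P := by linarith
  set σ := s.re with hσ
  have hpc0 : ((p:ℕ):ℂ) ≠ 0 := Nat.cast_ne_zero.mpr hp.pos.ne'
  have hnormcpow : ∀ t : ℂ, ‖((p:ℕ):ℂ) ^ t‖ = P ^ t.re := by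
    intro t
    rw [show ((p:ℕ):ℂ) = ((P:ℝ):ℂ) from (Complex.ofReal_natCast p).symm]
    rw [Complex.norm_cpow_eq_rpow_re_of_pos hP0]
  have hcps_ne : ((p:ℕ):ℂ) ^ s ≠ 0 := by
    intro h
    have h1 := hnormcpow s
    rw [h, norm_zero] at h1
    have h2 : (0:ℝ) < P ^ s.re := Real.rpow_pos_of_pos hP0 _
    linarith
  set u : ℂ := ((gp : ℝ) : ℂ) / ((p:ℕ):ℂ) ^ s with hu
  set v : ℂ := 1 / ((p:ℕ):ℂ) ^ (s+1) with hv
  have hvnorm : ‖v‖ = P ^ (-(σ+1)) := by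
    rw [hv, norm_div, norm_one, hnormcpow, Complex.add_re, Complex.one_re,
      Real.rpow_neg hP0.le, one_div]
  have hvle : ‖v‖ ≤ P ^ (δ - 1) := by
    rw [hvnorm]
    exact Real.rpow_le_rpow_of_exponent_le hP1 (by linarith)
  have h2half : P ^ (δ-1) ≤ (2:ℝ) ^ (-(1/2):ℝ) := by
    calc P ^ (δ-1) ≤ (2:ℝ)^(δ-1) :=
          Real.rpow_le_rpow_of_nonpos (by norm_num) hP2 (by linarith)
      _ ≤ (2:ℝ)^(-(1/2):ℝ) :=
          Real.rpow_le_rpow_of_exponent_le (by norm_num) (by linarith)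
  have h2hv : (2:ℝ)^(-(1/2):ℝ) ≤ 3/4 := by
    have hpos : 0 < (2:ℝ)^(-(1/2):ℝ) := Real.rpow_pos_of_pos two_pos _
    have hsq : ((2:ℝ)^(-(1/2):ℝ))^(2:ℕ) = 1/2 := by
      rw [← Real.rpow_natCast ((2:ℝ)^(-(1/2):ℝ)) 2, ← Real.rpow_mul (by norm_num)]
      norm_num
    nlinarith
  have hv34 : ‖v‖ ≤ 3/4 := le_trans hvle (le_trans h2half h2hv)
  have hunorm : ‖u‖ = |gp| * P ^ (-σ) := by
    rw [hu, norm_div, Complex.norm_real, Real.norm_eq_abs, hnormcpow,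
      ← hσ, div_eq_mul_inv, ← Real.rpow_neg hP0.le]
  -- bound on |gp|
  have hP1θ : P ≤ P ^ (1+θ) := by
    nth_rewrite 1 [← Real.rpow_one P]
    exact Real.rpow_le_rpow_of_exponent_le hP1 (by linarith)
  have habs : |gp| ≤ (|(k:ℝ)| + Cg) * P⁻¹ := by
    have t1 : |gp| - |(k:ℝ)/P| ≤ |gp - (k:ℝ)/P| := by
      have := abs_sub_abs_le_abs_sub gp ((k:ℝ)/P)
      linarith
    have t2 : |(k:ℝ)/P| = |(k:ℝ)| / P := by
      rw [abs_div, abs_of_pos hP0]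
    have t3 : Cg / P ^ (1+θ) ≤ Cg / P :=
      div_le_div_of_nonneg_left hCg.le hP0 hP1θ
    have := hgp
    rw [hPdef] at *
    calc |gp| ≤ |(k:ℝ)|/(p:ℝ) + Cg/(p:ℝ) := by rw [t2] at t1; linarith
    _ = (|(k:ℝ)| + Cg) * ((p:ℝ))⁻¹ := by ring
  have hule : ‖u‖ ≤ (|(k:ℝ)| + Cg) * P ^ (δ - 1) := by
    rw [hunorm]
    have e1 : P ^ (-σ) ≤ P ^ δ := Real.rpow_le_rpow_of_exponent_le hP1 (by linarith)
    have e2 : |gp| * P ^ (-σ) ≤ ((|(k:ℝ)| + Cg) * P⁻¹) * P ^ δ := by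
      apply mul_le_mul habs e1 (Real.rpow_nonneg hP0.le _)
      positivity
    calc |gp| * P ^ (-σ) ≤ ((|(k:ℝ)| + Cg) * P⁻¹) * P ^ δ := e2
      _ = (|(k:ℝ)| + Cg) * (P ^ (-(1:ℝ)) * P ^ δ) := by
          rw [Real.rpow_neg_one]; ring
      _ = (|(k:ℝ)| + Cg) * P ^ (δ - 1) := by
          rw [← Real.rpow_add hP0]; ring_nf
  -- decomposition
  have hsplit : ((p:ℕ):ℂ) ^ (s+1) = ((p:ℕ):ℂ) ^ s * ((p:ℕ):ℂ) := by
    rw [Complex.cpow_add _ _ hpc0, Complex.cpow_one]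
  set X : ℂ := (1 - v)^k with hX
  have hdecomp : (1 + u) * X - 1 = (u - (k:ℂ)*v) + ((X - 1 + (k:ℂ)*v) + u*(X - 1)) := by
    ring
  have ht1 : u - (k:ℂ)*v = ((gp - (k:ℝ)/P : ℝ):ℂ) / ((p:ℕ):ℂ)^s := by
    have hc : ((gp - (k:ℝ)/P : ℝ):ℂ) = (gp:ℂ) - (k:ℂ)/((p:ℕ):ℂ) := by
      rw [hPdef]; push_cast; ring
    rw [hu, hv, hsplit, hc]
    field_simp
  have hPe : ∀ a b : ℝ, a ≤ b → P ^ a ≤ P ^ b := fun a b hab =>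
    Real.rpow_le_rpow_of_exponent_le hP1 hab
  have hte : P ^ ((δ-1)*2) ≤ P ^ (-(1+ε)) := hPe _ _ (by linarith)
  have ht1norm : ‖u - (k:ℂ)*v‖ ≤ Cg * P ^ (-(1+ε)) := by
    rw [ht1, norm_div, Complex.norm_real, Real.norm_eq_abs, hnormcpow, ← hσ]
    have e1 : P ^ σ > 0 := Real.rpow_pos_of_pos hP0 _
    have e2 : |gp - (k:ℝ)/P| / P ^ σ = |gp - (k:ℝ)/P| * P ^ (-σ) := by
      rw [div_eq_mul_inv, ← Real.rpow_neg hP0.le]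
    rw [e2]
    have e3 : P ^ (-σ) ≤ P ^ δ := hPe _ _ (by linarith)
    have e4 : Cg / P ^ (1+θ) = Cg * P ^ (-(1+θ)) := by
      rw [Real.rpow_neg hP0.le, div_eq_mul_inv]
    have hgp' : |gp - (k:ℝ)/P| ≤ Cg * P ^ (-(1+θ)) := by
      rw [← e4]; exact hgp
    calc |gp - (k:ℝ)/P| * P ^ (-σ) ≤ (Cg * P ^ (-(1+θ))) * P ^ δ := by
          apply mul_le_mul hgp' e3 (Real.rpow_nonneg hP0.le _)
          positivity
      _ = Cg * P ^ (-(1+θ) + δ) := by rw [mul_assoc, ← Real.rpow_add hP0]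
      _ ≤ Cg * P ^ (-(1+ε)) :=
          mul_le_mul_of_nonneg_left (hPe (-(1+θ) + δ) (-(1+ε)) (by linarith)) hCg.le
  have hvsq : ‖v‖^2 ≤ P ^ ((δ-1)*2) := by
    have : (P ^ (δ-1))^(2:ℕ) = P ^ ((δ-1)*2) := by
      rw [← Real.rpow_natCast (P ^ (δ-1)) 2, ← Real.rpow_mul hP0.le]
      norm_num
    rw [← this]
    exact pow_le_pow_left₀ (norm_nonneg v) hvle 2
  have ht2norm : ‖X - 1 + (k:ℂ)*v‖ ≤ C2 * P ^ (-(1+ε)) := by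
    calc ‖X - 1 + (k:ℂ)*v‖ ≤ C2 * ‖v‖^2 := hC2 v hv34
      _ ≤ C2 * P ^ ((δ-1)*2) := mul_le_mul_of_nonneg_left hvsq hC20
      _ ≤ C2 * P ^ (-(1+ε)) := mul_le_mul_of_nonneg_left hte hC20
  have ht3norm : ‖u * (X - 1)‖ ≤ ((|(k:ℝ)| + Cg) * C1) * P ^ (-(1+ε)) := by
    rw [norm_mul]
    have e1 : ‖X - 1‖ ≤ C1 * P ^ (δ-1) := by
      calc ‖X - 1‖ ≤ C1 * ‖v‖ := hC1 v hv34
        _ ≤ C1 * P ^ (δ-1) := mul_le_mul_of_nonneg_left hvle hC10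
    calc ‖u‖ * ‖X - 1‖ ≤ ((|(k:ℝ)| + Cg) * P ^ (δ-1)) * (C1 * P ^ (δ-1)) := by
          apply mul_le_mul hule e1 (norm_nonneg _)
          positivity
      _ = ((|(k:ℝ)| + Cg) * C1) * (P ^ (δ-1) * P ^ (δ-1)) := by ring
      _ = ((|(k:ℝ)| + Cg) * C1) * P ^ ((δ-1)*2) := by
          rw [← Real.rpow_add hP0]; ring_nf
      _ ≤ ((|(k:ℝ)| + Cg) * C1) * P ^ (-(1+ε)) := by
          apply mul_le_mul_of_nonneg_left hte
          positivity
  calc ‖(1 + ((gp : ℝ) : ℂ) / ((p:ℕ):ℂ) ^ s) * (1 - 1 / ((p:ℕ):ℂ) ^ (s+1)) ^ k - 1‖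
      = ‖(u - (k:ℂ)*v) + ((X - 1 + (k:ℂ)*v) + u*(X - 1))‖ := by rw [← hdecomp]
    _ ≤ ‖u - (k:ℂ)*v‖ + (‖X - 1 + (k:ℂ)*v‖ + ‖u*(X - 1)‖) :=
        le_trans (norm_add_le _ _) (by gcongr; exact norm_add_le _ _)
    _ ≤ Cg * P ^ (-(1+ε)) + (C2 * P ^ (-(1+ε)) + ((|(k:ℝ)| + Cg) * C1) * P ^ (-(1+ε))) := by
        gcongr
    _ = (Cg + C2 + (|(k:ℝ)| + Cg) * C1) * P ^ (-(1+ε)) := by ring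
    _ ≤ (Cg + C2 + (|(k:ℝ)| + Cg) * C1 + 1) * P ^ (-(1+ε)) :=
        mul_le_mul_of_nonneg_right (by linarith) (Real.rpow_nonneg hP0.le _)

set_option maxHeartbeats 2000000

/-- Lemma 6 of the paper: for `Re s ≥ -δ`, with `0 < δ < min(θ, 1/2)`, the product
`Π_{p ∤ q} (1 + g(p)/p^s)(1 - 1/p^{s+1})^k` converges absolutely and is bounded
uniformly in `q` and `s`. -/
theorem stmt7 (k : ℤ) (θ δ Cg : ℝ) (hθ : 0 < θ) (hδ0 : 0 < δ)
    (hδ : δ < min θ (1 / 2)) (hCg : 0 < Cg) :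
    ∃ B : ℝ, 0 < B ∧ ∀ q : ℕ, 0 < q → ∀ g : ℕ → ℝ, MultSF g →
      (∀ p : ℕ, p.Prime → ¬ p ∣ q → |g p - k / p| ≤ Cg / (p : ℝ) ^ (1 + θ)) →
      ∀ s : ℂ, -δ ≤ s.re →
        Summable (fun p : {p : ℕ // p.Prime ∧ ¬ p ∣ q} =>
          ‖(1 + ((g p : ℝ) : ℂ) / ((p : ℕ) : ℂ) ^ s) *
              (1 - 1 / ((p : ℕ) : ℂ) ^ (s + 1)) ^ k - 1‖) ∧
        ‖∏' p : {p : ℕ // p.Prime ∧ ¬ p ∣ q},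
            (1 + ((g p : ℝ) : ℂ) / ((p : ℕ) : ℂ) ^ s) *
              (1 - 1 / ((p : ℕ) : ℂ) ^ (s + 1)) ^ k‖ ≤ B := by
  have hδθ : δ < θ := lt_of_lt_of_le hδ (min_le_left _ _)
  have hδh : δ < 1/2 := lt_of_lt_of_le hδ (min_le_right _ _)
  obtain ⟨A, hA0, hA⟩ := key_est k θ δ Cg hθ hδ0 hδθ hδh hCg
  set ε := min (θ - δ) (1 - 2*δ) with hεdef
  have hε0 : 0 < ε := lt_min (by linarith) (by linarith)
  set r : ℝ := -(1 + ε) with hrdef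
  have hr : r < -1 := by rw [hrdef]; linarith
  have hr0 : r ≤ 0 := by linarith
  have hZsum : Summable (fun n : ℕ => (n:ℝ) ^ r) := Real.summable_nat_rpow.2 hr
  set Z : ℝ := ∑' n : ℕ, (n:ℝ) ^ r with hZdef
  have hZ0 : 0 ≤ Z := tsum_nonneg (fun n => Real.rpow_nonneg (Nat.cast_nonneg n) r)
  set N : ℕ := ⌈2*A⌉₊ + 2 with hNdef
  refine ⟨(1+A)^N * Real.exp ((3/2) * (A * Z)), by positivity, ?_⟩
  intro q hq g hgm hgp s hs
  set F : {p : ℕ // p.Prime ∧ ¬ p ∣ q} → ℂ := fun p =>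
    (1 + ((g p : ℝ) : ℂ) / ((p : ℕ) : ℂ) ^ s) * (1 - 1 / ((p : ℕ) : ℂ) ^ (s + 1)) ^ k
    with hF
  have hFbound : ∀ p : {p : ℕ // p.Prime ∧ ¬ p ∣ q}, ‖F p - 1‖ ≤ A * ((p:ℕ):ℝ) ^ r :=
    fun p => hA p p.2.1 (g p) (hgp p p.2.1 p.2.2) s hs
  have hsumA : Summable (fun p : {p : ℕ // p.Prime ∧ ¬ p ∣ q} => A * ((p:ℕ):ℝ) ^ r) :=
    (hZsum.mul_left A).comp_injective Subtype.val_injective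
  have h1 : Summable (fun p : {p : ℕ // p.Prime ∧ ¬ p ∣ q} => ‖F p - 1‖) :=
    Summable.of_nonneg_of_le (fun _ => norm_nonneg _) hFbound hsumA
  refine ⟨h1, ?_⟩
  -- the bad (small primes) set
  set S : Set {p : ℕ // p.Prime ∧ ¬ p ∣ q} := {p | 1/2 < A * ((p:ℕ):ℝ) ^ r} with hSdef
  have hSsub : ∀ p ∈ S, (p:ℕ) < N := by
    intro p hp
    have hp2 : (2:ℝ) ≤ ((p:ℕ):ℝ) := by exact_mod_cast p.2.1.two_le
    have hp1 : (1:ℝ) ≤ ((p:ℕ):ℝ) := by linarith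
    have hp0 : (0:ℝ) < ((p:ℕ):ℝ) := by linarith
    have h2 : ((p:ℕ):ℝ) ^ r ≤ ((p:ℕ):ℝ)⁻¹ := by
      rw [← Real.rpow_neg_one]
      exact Real.rpow_le_rpow_of_exponent_le hp1 (by linarith)
    have h3 : (1:ℝ)/2 < A * ((p:ℕ):ℝ)⁻¹ := by
      have := hp
      rw [hSdef] at this
      have h4 : A * ((p:ℕ):ℝ) ^ r ≤ A * ((p:ℕ):ℝ)⁻¹ := mul_le_mul_of_nonneg_left h2 hA0.le
      simp only [Set.mem_setOf_eq] at this
      linarith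
    have h5 : ((p:ℕ):ℝ) < 2*A := by
      have hinv : ((p:ℕ):ℝ)⁻¹ * ((p:ℕ):ℝ) = 1 := inv_mul_cancel₀ hp0.ne'
      nlinarith
    have h6 : (2*A:ℝ) ≤ (N:ℝ) := by
      rw [hNdef]
      push_cast
      have := Nat.le_ceil (2*A)
      linarith
    exact_mod_cast lt_of_lt_of_le h5 h6
  have hSfin : S.Finite := by
    apply Set.Finite.subset (Set.Finite.preimage
      (Set.injOn_of_injective Subtype.val_injective) (Set.finite_Iio N))
    intro p hp
    exact hSsub p hp
  haveI : Fintype ↥S := hSfin.fintype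
  -- good set facts
  have hgood : ∀ p : ↥Sᶜ, ‖F ↑p - 1‖ ≤ 1/2 := by
    intro p
    have hp := p.2
    simp only [Set.mem_compl_iff, hSdef, Set.mem_setOf_eq, not_lt] at hp
    exact le_trans (hFbound ↑p) hp
  have hFne : ∀ p : ↥Sᶜ, F ↑p ≠ 0 := by
    intro p h
    have := hgood p
    rw [h] at this
    simp at this
    linarith
  have hlogle : ∀ p : ↥Sᶜ, ‖Complex.log (F ↑p)‖ ≤ 3/2 * (A * (((p:ℕ)):ℝ) ^ r) := by
    intro p
    have h2 : F ↑p = 1 + (F ↑p - 1) := by ring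
    calc ‖Complex.log (F ↑p)‖ = ‖Complex.log (1 + (F ↑p - 1))‖ := by rw [← h2]
      _ ≤ 3/2 * ‖F ↑p - 1‖ := Complex.norm_log_one_add_half_le_self (hgood p)
      _ ≤ 3/2 * (A * (((p:ℕ)):ℝ) ^ r) := by
          have := hFbound ↑p
          linarith
  have hlognormsum : Summable (fun p : ↥Sᶜ => ‖Complex.log (F ↑p)‖) := by
    apply Summable.of_nonneg_of_le (fun _ => norm_nonneg _) hlogle
    exact ((hsumA.mul_left (3/2)).comp_injective Subtype.val_injective)
  have hlogsum : Summable (fun p : ↥Sᶜ => Complex.log (F ↑p)) := hlognormsum.of_norm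
  have Mgood : Multipliable (fun p : ↥Sᶜ => F ↑p) :=
    Complex.multipliable_of_summable_log hlogsum
  have hprodgood : ∏' p : ↥Sᶜ, F ↑p = Complex.exp (∑' p : ↥Sᶜ, Complex.log (F ↑p)) := by
    have := Complex.cexp_tsum_eq_tprod (f := fun p : ↥Sᶜ => F ↑p) hFne hlogsum
    exact this.symm
  have htsumle : ∑' p : ↥Sᶜ, ‖Complex.log (F ↑p)‖ ≤ 3/2 * (A * Z) := by
    have step : ∑' p : ↥Sᶜ, ‖Complex.log (F ↑p)‖ ≤ ∑' n : ℕ, 3/2 * (A * (n:ℝ) ^ r) := by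
      apply Summable.tsum_le_tsum_of_inj (fun p : ↥Sᶜ => ((p : {p : ℕ // p.Prime ∧ ¬ p ∣ q}) : ℕ))
        (Subtype.val_injective.comp Subtype.val_injective)
        (fun c _ => by positivity)
        (fun p => hlogle p)
        hlognormsum
        ((hZsum.mul_left A).mul_left (3/2))
    calc ∑' p : ↥Sᶜ, ‖Complex.log (F ↑p)‖ ≤ ∑' n : ℕ, 3/2 * (A * (n:ℝ) ^ r) := step
      _ = 3/2 * (A * Z) := by rw [tsum_mul_left, tsum_mul_left]
  have hnormgood : ‖∏' p : ↥Sᶜ, F ↑p‖ ≤ Real.exp ((3/2) * (A * Z)) := by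
    rw [hprodgood, Complex.norm_exp]
    apply Real.exp_le_exp.2
    calc (∑' p : ↥Sᶜ, Complex.log (F ↑p)).re ≤ ‖∑' p : ↥Sᶜ, Complex.log (F ↑p)‖ :=
          Complex.re_le_norm _
      _ = ‖∑' p : ↥Sᶜ, Complex.log (F ↑p)‖ := rfl
      _ ≤ ∑' p : ↥Sᶜ, ‖Complex.log (F ↑p)‖ := norm_tsum_le_tsum_norm hlognormsum
      _ ≤ (3/2) * (A * Z) := htsumle
  -- bad set bound
  have hFle : ∀ p : {p : ℕ // p.Prime ∧ ¬ p ∣ q}, ‖F p‖ ≤ 1 + A := by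
    intro p
    have hp1 : (1:ℝ) ≤ ((p:ℕ):ℝ) := by
      have := p.2.1.two_le
      have : (2:ℝ) ≤ ((p:ℕ):ℝ) := by exact_mod_cast this
      linarith
    have h2 : ((p:ℕ):ℝ) ^ r ≤ 1 := Real.rpow_le_one_of_one_le_of_nonpos hp1 hr0
    have h3 : ‖F p‖ ≤ ‖F p - 1‖ + 1 := by
      calc ‖F p‖ = ‖(F p - 1) + 1‖ := by ring_nf
        _ ≤ ‖F p - 1‖ + ‖(1:ℂ)‖ := norm_add_le _ _
        _ = ‖F p - 1‖ + 1 := by rw [norm_one]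
    have h4 := hFbound p
    have h5 : A * ((p:ℕ):ℝ) ^ r ≤ A := by nlinarith
    linarith
  have Mbad : Multipliable (fun p : ↥S => F ↑p) := (hasProd_fintype _).multipliable
  have hcard : Fintype.card ↥S ≤ N := by
    have : Function.Injective (fun p : ↥S => (⟨(p : {p : ℕ // p.Prime ∧ ¬ p ∣ q}), hSsub _ p.2⟩ : Fin N)) := by
      intro a b hab
      simp only [Fin.mk.injEq] at hab
      exact Subtype.ext (Subtype.ext (by exact_mod_cast hab))
    simpa using Fintype.card_le_of_injective _ this
  have hnormbad : ‖∏' p : ↥S, F ↑p‖ ≤ (1+A)^N := by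
    rw [tprod_fintype, norm_prod]
    calc ∏ p : ↥S, ‖F ↑p‖ ≤ ∏ _p : ↥S, (1+A) :=
          Finset.prod_le_prod (fun _ _ => norm_nonneg _) (fun p _ => hFle ↑p)
      _ = (1+A) ^ (Fintype.card ↥S) := by rw [Finset.prod_const, Finset.card_univ]
      _ ≤ (1+A)^N := pow_le_pow_right₀ (by linarith) hcard
  have Mfull : Multipliable F := Multipliable.mul_compl (s := S) Mbad Mgood
  have hdec := Multipliable.tprod_mul_tprod_compl (f := F) (s := S) Mbad Mgood
  rw [← hdec, norm_mul]
  exact mul_le_mul hnormbad hnormgood (norm_nonneg _) (by positivity)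
end

section
/- Let k ≥ 1 be an integer and ν a multiplicative function on squarefree positive integers with 0 ≤ ν_p ≤ k for every prime p. Then for all R ≥ 2 and z ≥ 2, Σ_{d₁, d₂} ν_{[d₁,d₂]} ≤ C(k)·R²·(log z)^{3k}, where the sum runs over squarefree d₁, d₂ ≤ R all of whose prime factors are less than z, [d₁,d₂] denotes the least common multiple, and C(k) depends only on k. -/
open Finset
open scoped Classical

private lemma nu_eq_prod {ν : ℕ → ℝ} (h1 : ν 1 = 1)
    (hmul : ∀ m n : ℕ, Nat.Coprime m n → Squarefree m → Squarefree n → ν (m*n) = ν m * ν n) :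
    ∀ d : ℕ, Squarefree d → ν d = ∏ p ∈ d.primeFactors, ν p := by
  intro d
  induction d using Nat.strong_induction_on with
  | _ d ih =>
    intro hd
    rcases eq_or_ne d 1 with rfl | hd1
    · simpa using h1
    have hd0 : d ≠ 0 := hd.ne_zero
    set p := d.minFac with hp
    have hpp : p.Prime := Nat.minFac_prime hd1
    have hpdvd : p ∣ d := Nat.minFac_dvd d
    set m := d / p with hm
    have hdm : d = p * m := (Nat.mul_div_cancel' hpdvd).symm
    have hmsf : Squarefree m := hd.squarefree_of_dvd (Nat.div_dvd_of_dvd hpdvd)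
    have hm0 : m ≠ 0 := hmsf.ne_zero
    have hnd : ¬ p ∣ m := by
      intro hdvd
      have : p * p ∣ d := by
        rw [hdm]; exact mul_dvd_mul_left p hdvd
      exact hpp.not_isUnit (hd p this)
    have hcop : Nat.Coprime p m := (Nat.Prime.coprime_iff_not_dvd hpp).2 hnd
    have hmd : m < d := by
      rw [hdm]
      have : 1 < p := hpp.one_lt
      calc m = 1 * m := (one_mul m).symm
      _ < p * m := by
        exact Nat.mul_lt_mul_of_lt_of_le this le_rfl (Nat.pos_of_ne_zero hm0)
    have hpf : d.primeFactors = insert p m.primeFactors := by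
      rw [hdm, Nat.primeFactors_mul hpp.ne_zero hm0, hpp.primeFactors]
      ext q; simp
    have hpsf : Squarefree p := hpp.squarefree
    rw [hdm, hmul p m hcop hpsf hmsf, ih m hmd hmsf, ← hdm, hpf,
      Finset.prod_insert (fun hmem => hnd (Nat.dvd_of_mem_primeFactors hmem))]

private lemma chebyshev_L (N : ℕ) (hN : 2 ≤ N) :
    ∑ p ∈ Nat.primesBelow (N+1), Real.log p / p ≤ Real.log N + 2 := by
  have hN0 : (0:ℝ) < N := by positivity
  set P := Nat.primesBelow (N+1) with hP
  have hprime : ∀ p ∈ P, Nat.Prime p := fun p hp => Nat.prime_of_mem_primesBelow hp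
  have hle : ∀ p ∈ P, p ≤ N := fun p hp =>
    Nat.lt_succ_iff.mp (Nat.lt_of_mem_primesBelow hp)
  -- theta bound
  have theta : ∑ p ∈ P, Real.log p ≤ N * Real.log 4 := by
    have h1 : (primorial N : ℝ) ≤ ((4:ℝ) ^ N) := by
      exact_mod_cast primorial_le_4_pow N
    have h2 : Real.log (primorial N) ≤ N * Real.log 4 := by
      calc Real.log (primorial N) ≤ Real.log ((4:ℝ)^N) := by
            apply Real.log_le_log (by exact_mod_cast primorial_pos N) h1
        _ = N * Real.log 4 := by rw [Real.log_pow]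
    have h3 : (primorial N : ℝ) = ∏ p ∈ P, (p : ℝ) := by
      rw [primorial, hP, Nat.primesBelow]
      push_cast
      rfl
    rwa [h3, Real.log_prod (fun p hp => by
      exact_mod_cast (hprime p hp).pos.ne')] at h2
  -- Legendre lower bound on log N!
  have hfact0 : (Nat.factorial N) ≠ 0 := Nat.factorial_ne_zero N
  have legendre : ∀ p ∈ P, (N / p : ℕ) ≤ ((Nat.factorial N)).factorization p := by
    intro p hp
    have hpp := hprime p hp
    rw [← Nat.Prime.pow_dvd_iff_le_factorization hpp hfact0]
    rw [Nat.Prime.pow_dvd_factorial_iff hpp (Nat.lt_succ_of_le (Nat.log_le_self p N))]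
    have h1 : (1:ℕ) ∈ Finset.Ico 1 (N+1) := by rw [Finset.mem_Ico]; omega
    have := Finset.single_le_sum (f := fun i => N / p ^ i) (fun i _ => Nat.zero_le _) h1
    simpa [pow_one] using this
  -- log N! as a sum
  have hlogfact : Real.log ((Nat.factorial N) : ℕ) = ∑ q ∈ ((Nat.factorial N)).primeFactors,
      (((Nat.factorial N)).factorization q : ℝ) * Real.log q := by
    conv_lhs => rw [← Nat.factorization_prod_pow_eq_self hfact0]
    rw [Nat.prod_factorization_eq_prod_primeFactors]
    push_cast
    rw [Real.log_prod]
    · exact Finset.sum_congr rfl fun q hq => by rw [Real.log_pow]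
    · intro q hq
      have := (Nat.prime_of_mem_primeFactors hq).pos
      positivity
  have hsub : P ⊆ ((Nat.factorial N)).primeFactors := by
    intro p hp
    rw [Nat.mem_primeFactors]
    exact ⟨hprime p hp, Nat.dvd_factorial (hprime p hp).pos (hle p hp), hfact0⟩
  have logp_nonneg : ∀ q : ℕ, q.Prime → 0 ≤ Real.log q := fun q hq =>
    Real.log_nonneg (by exact_mod_cast hq.one_lt.le)
  have key : ∑ p ∈ P, ((N / p : ℕ) : ℝ) * Real.log p ≤ Real.log ((Nat.factorial N) : ℕ) := by
    rw [hlogfact]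
    calc ∑ p ∈ P, ((N / p : ℕ) : ℝ) * Real.log p
        ≤ ∑ p ∈ P, (((Nat.factorial N)).factorization p : ℝ) * Real.log p := by
          refine Finset.sum_le_sum fun p hp => ?_
          exact mul_le_mul_of_nonneg_right (by exact_mod_cast legendre p hp)
            (logp_nonneg p (hprime p hp))
      _ ≤ ∑ q ∈ ((Nat.factorial N)).primeFactors, (((Nat.factorial N)).factorization q : ℝ) * Real.log q := by
          refine Finset.sum_le_sum_of_subset_of_nonneg hsub fun q hq _ => ?_
          have h0 := logp_nonneg q (Nat.prime_of_mem_primeFactors hq)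
          positivity
  -- floor bound
  have floor_bd : ∀ p ∈ P, (N:ℝ)/p - 1 ≤ ((N / p : ℕ) : ℝ) := by
    intro p hp
    have hp0 : (0:ℝ) < p := by exact_mod_cast (hprime p hp).pos
    have h' : (N:ℝ) < ((N / p : ℕ) + 1) * p := by
      exact_mod_cast (Nat.div_lt_iff_lt_mul (hprime p hp).pos).mp (Nat.lt_succ_self _)
    rw [div_sub_one hp0.ne', div_le_iff₀ hp0]
    nlinarith
  -- combine
  have logfact_le : Real.log ((Nat.factorial N) : ℕ) ≤ N * Real.log N := by
    calc Real.log ((Nat.factorial N) : ℕ) ≤ Real.log ((N:ℝ)^N) := by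
          apply Real.log_le_log (by exact_mod_cast (Nat.factorial_pos N))
          exact_mod_cast Nat.factorial_le_pow N
      _ = N * Real.log N := by rw [Real.log_pow]
  have main : ∑ p ∈ P, ((N:ℝ)/p - 1) * Real.log p ≤ N * Real.log N := by
    refine le_trans (Finset.sum_le_sum fun p hp => mul_le_mul_of_nonneg_right
      (floor_bd p hp) (logp_nonneg p (hprime p hp))) (key.trans logfact_le)
  have expand : ∑ p ∈ P, ((N:ℝ)/p - 1) * Real.log p
      = N * (∑ p ∈ P, Real.log p / p) - ∑ p ∈ P, Real.log p := by
    rw [Finset.mul_sum, ← Finset.sum_sub_distrib]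
    refine Finset.sum_congr rfl fun p hp => ?_
    have hp0 : (0:ℝ) < p := by exact_mod_cast (hprime p hp).pos
    field_simp
  have : N * (∑ p ∈ P, Real.log p / p) ≤ N * Real.log N + N * Real.log 4 := by
    have := main
    rw [expand] at this
    linarith
  have log4 : Real.log 4 ≤ 2 := by
    rw [show (4:ℝ) = 2^2 by norm_num, Real.log_pow]
    have := Real.log_two_lt_d9
    push_cast
    linarith
  have := (mul_le_mul_iff_right₀ hN0).mp (this.trans (by nlinarith [Real.log_nonneg (show (1:ℝ) ≤ N by exact_mod_cast Nat.one_le_iff_ne_zero.mpr (by omega))] : (N:ℝ) * Real.log N + N * Real.log 4 ≤ N * (Real.log N + 2)))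
  exact this

private lemma primes_recip_le_log (N : ℕ) :
    ∑ p ∈ Nat.primesBelow (N+1), (1:ℝ)/p ≤ 1 + Real.log N := by
  calc ∑ p ∈ Nat.primesBelow (N+1), (1:ℝ)/p ≤ ∑ d ∈ Finset.Icc 1 N, (d:ℝ)⁻¹ := by
        simp_rw [one_div]
        refine Finset.sum_le_sum_of_subset_of_nonneg ?_ (fun d hd _ => by positivity)
        intro p hp
        rw [Finset.mem_Icc]
        exact ⟨(Nat.prime_of_mem_primesBelow hp).one_lt.le.trans' (by norm_num),
          Nat.lt_succ_iff.mp (Nat.lt_of_mem_primesBelow hp)⟩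
    _ = (harmonic N : ℝ) := by
        rw [harmonic_eq_sum_Icc]; push_cast; rfl
    _ ≤ 1 + Real.log N := harmonic_le_one_add_log N

private lemma log_sub_log_ge (a b : ℝ) (ha : 0 < a) (hab : a ≤ b) :
    (b - a)/b ≤ Real.log b - Real.log a := by
  have hb : 0 < b := ha.trans_le hab
  have h := Real.log_le_sub_one_of_pos (show 0 < a/b by positivity)
  rw [Real.log_div ha.ne' hb.ne'] at h
  have : a/b - 1 = -((b-a)/b) := by field_simp; ring
  linarith [h.trans_eq this]

private lemma sum_recip_primes (N : ℕ) (hN : 2 ≤ N) :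
    ∑ p ∈ Nat.primesBelow (N+1), (1:ℝ)/p ≤
      1.5 * Real.log (Real.log N) + 7 := by
  -- numeric facts
  have e4 : Real.exp 4 ≤ 55 := by
    have h1 : Real.exp 4 = Real.exp 1 ^ (4:ℕ) := by
      rw [← Real.exp_nat_mul]; norm_num
    rw [h1]
    calc Real.exp 1 ^ (4:ℕ) ≤ 2.7182818286 ^ (4:ℕ) :=
          pow_le_pow_left₀ (Real.exp_pos 1).le Real.exp_one_lt_d9.le 4
      _ ≤ 55 := by norm_num
  have log2pos := Real.log_two_gt_d9
  have log2lt := Real.log_two_lt_d9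
  have hlog55lb : (4:ℝ) ≤ Real.log 55 := by
    rw [Real.le_log_iff_exp_le (by norm_num)]; exact e4
  have hlog55 : Real.log 55 ≤ 6 * Real.log 2 := by
    calc Real.log 55 ≤ Real.log 64 := Real.log_le_log (by norm_num) (by norm_num)
      _ = 6 * Real.log 2 := by
        rw [show (64:ℝ) = 2^(6:ℕ) by norm_num, Real.log_pow]; norm_num
  -- for M ≥ 55 : log M ≥ 4
  have hlogge : ∀ M : ℕ, 55 ≤ M → (4:ℝ) ≤ Real.log M := by
    intro M hM
    calc (4:ℝ) ≤ Real.log 55 := hlog55lb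
      _ ≤ Real.log M := Real.log_le_log (by norm_num) (by exact_mod_cast hM)
  -- main induction: for M ≥ 55
  have main : ∀ M : ℕ, 55 ≤ M →
      ∑ p ∈ Nat.primesBelow (M+1), (1:ℝ)/p ≤
        (∑ p ∈ Nat.primesBelow (M+1), Real.log p / p) / Real.log M
          + 1.5 * Real.log (Real.log M) + 4 := by
    intro M hM
    induction M, hM using Nat.le_induction with
    | base =>
      have h1 : ∑ p ∈ Nat.primesBelow (55+1), (1:ℝ)/p ≤ 1 + Real.log 55 :=
        primes_recip_le_log 55
      have hloglog : 1 ≤ Real.log (Real.log 55) := by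
        rw [Real.le_log_iff_exp_le (by linarith)]
        calc Real.exp 1 ≤ 2.7182818286 := Real.exp_one_lt_d9.le
          _ ≤ 5 * Real.log 2 := by linarith
          _ = Real.log 32 := by
            rw [show (32:ℝ) = 2^(5:ℕ) by norm_num, Real.log_pow]; norm_num
          _ ≤ Real.log 55 := Real.log_le_log (by norm_num) (by norm_num)
      have hLpos : 0 ≤ (∑ p ∈ Nat.primesBelow (55+1), Real.log p / p) / Real.log 55 := by
        apply div_nonneg _ (by linarith)
        apply Finset.sum_nonneg
        intro p hp
        have h2 := (Nat.prime_of_mem_primesBelow hp).one_lt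
        have : (1:ℝ) ≤ p := by exact_mod_cast h2.le
        have := Real.log_nonneg this
        positivity
      have : ((55:ℕ):ℝ) = (55:ℝ) := by norm_cast
      rw [this]
      linarith
    | succ M hM ih =>
      have hM2 : (2:ℕ) ≤ M := by omega
      have hMpos : (0:ℝ) < M := by positivity
      have hlogM : (4:ℝ) ≤ Real.log M := hlogge M hM
      have hlogM1 : Real.log M ≤ Real.log (M+1) := by
        apply Real.log_le_log hMpos; push_cast; linarith
      have hlogM1pos : (0:ℝ) < Real.log (M+1) := by linarith
      have hlogMpos : (0:ℝ) < Real.log M := by linarith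
      set L := ∑ p ∈ Nat.primesBelow (M+1), Real.log p / p with hL
      have hLle : L ≤ Real.log M + 2 := chebyshev_L M hM2
      have hLnn : 0 ≤ L := by
        apply Finset.sum_nonneg
        intro p hp
        have h2 := (Nat.prime_of_mem_primesBelow hp).one_lt
        have : (1:ℝ) ≤ p := by exact_mod_cast h2.le
        have := Real.log_nonneg this
        positivity
      have hL15 : L ≤ 1.5 * Real.log M := by linarith
      -- key monotone inequality
      have concave : (Real.log (M+1) - Real.log M)/Real.log (M+1)
          ≤ Real.log (Real.log (M+1)) - Real.log (Real.log M) :=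
        log_sub_log_ge _ _ hlogMpos hlogM1
      have key : L / Real.log M ≤ L / Real.log (M+1)
          + 1.5 * (Real.log (Real.log (M+1)) - Real.log (Real.log M)) := by
        have h1 : L / Real.log M - L / Real.log (M+1)
            = (L / Real.log M) * ((Real.log (M+1) - Real.log M)/Real.log (M+1)) := by
          field_simp
        have hΔ : 0 ≤ (Real.log (M+1) - Real.log M)/Real.log (M+1) := by
          apply div_nonneg (by linarith) hlogM1pos.le
        have hq : L / Real.log M ≤ 1.5 := by
          rw [div_le_iff₀ hlogMpos]; linarith
        have h2 : (L / Real.log M) * ((Real.log (M+1) - Real.log M)/Real.log (M+1))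
            ≤ 1.5 * ((Real.log (M+1) - Real.log M)/Real.log (M+1)) :=
          mul_le_mul_of_nonneg_right hq hΔ
        have h3 := mul_le_mul_of_nonneg_left concave (by norm_num : (0:ℝ) ≤ 1.5)
        linarith
      have hsplit := Nat.primesBelow_succ (M+1)
      have hnm : (M+1) ∉ Nat.primesBelow (M+1) := Nat.notMem_primesBelow _
      have hcast : ((M:ℕ)+1 : ℝ) = ((M+1 : ℕ) : ℝ) := by push_cast; ring
      by_cases hp : (M+1).Prime
      · rw [show (M+1+1) = (M+1)+1 from rfl, hsplit, if_pos hp,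
          Finset.sum_insert hnm, Finset.sum_insert hnm]
        have hM1pos : (0:ℝ) < ((M+1:ℕ):ℝ) := by positivity
        have hrw : (Real.log ((M+1:ℕ):ℝ)/((M+1:ℕ):ℝ) + L)/Real.log ((M+1:ℕ):ℝ)
            = 1/((M+1:ℕ):ℝ) + L/Real.log ((M+1:ℕ):ℝ) := by
          have hlogne : Real.log ((M+1:ℕ):ℝ) ≠ 0 := by
            rw [← hcast]; exact hlogM1pos.ne'
          rw [add_div, div_right_comm, div_self hlogne]
        push_cast at hrw ⊢
        push_cast at key ih concave
        linarith
      · rw [show (M+1+1) = (M+1)+1 from rfl, hsplit, if_neg hp]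
        push_cast
        push_cast at key ih
        linarith
  -- final assembly
  by_cases hbig : 55 ≤ N
  · have h := main N hbig
    have hlogN : (4:ℝ) ≤ Real.log N := hlogge N hbig
    have hlogNpos : (0:ℝ) < Real.log N := by linarith
    set L := ∑ p ∈ Nat.primesBelow (N+1), Real.log p / p with hLdef
    have hLle : L ≤ Real.log N + 2 := chebyshev_L N hN
    have hq : L / Real.log N ≤ 1.5 := by
      rw [div_le_iff₀ hlogNpos]; linarith
    linarith
  · push_neg at hbig
    have hsub : Nat.primesBelow (N+1) ⊆ Nat.primesBelow 56 := by
      intro p hp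
      rw [Nat.mem_primesBelow]
      exact ⟨by have := Nat.lt_of_mem_primesBelow hp; omega,
        Nat.prime_of_mem_primesBelow hp⟩
    have h1 : ∑ p ∈ Nat.primesBelow (N+1), (1:ℝ)/p
        ≤ ∑ p ∈ Nat.primesBelow 56, (1:ℝ)/p := by
      refine Finset.sum_le_sum_of_subset_of_nonneg hsub fun p hp _ => by positivity
    have h2 : ∑ p ∈ Nat.primesBelow (55+1), (1:ℝ)/p ≤ 1 + Real.log 55 :=
      primes_recip_le_log 55
    have hlogN2 : Real.log 2 ≤ Real.log N :=
      Real.log_le_log (by norm_num) (by exact_mod_cast hN)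
    have hlogNpos : (0:ℝ) < Real.log N := by linarith
    have hloglog : (-1:ℝ) ≤ Real.log (Real.log N) := by
      rw [Real.le_log_iff_exp_le hlogNpos]
      have : Real.exp (-1) = (Real.exp 1)⁻¹ := by
        rw [← Real.exp_neg]
      rw [this]
      have h3 : (2.7182818283:ℝ) < Real.exp 1 := Real.exp_one_gt_d9
      have h4 : (Real.exp 1)⁻¹ ≤ (2.7182818283:ℝ)⁻¹ := by
        apply inv_anti₀ (by norm_num) h3.le
      calc (Real.exp 1)⁻¹ ≤ (2.7182818283:ℝ)⁻¹ := h4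
        _ ≤ 0.6931471803 := by norm_num
        _ ≤ Real.log 2 := log2pos.le
        _ ≤ Real.log N := hlogN2
    norm_num at h2
    simp_rw [← one_div] at h2
    linarith

private lemma squarefree_lcm' {d₁ d₂ : ℕ} (h1 : Squarefree d₁) (h2 : Squarefree d₂) :
    Squarefree (Nat.lcm d₁ d₂) := by
  have n1 := h1.ne_zero
  have n2 := h2.ne_zero
  have nl : Nat.lcm d₁ d₂ ≠ 0 := Nat.lcm_ne_zero n1 n2
  apply Nat.squarefree_of_factorization_le_one nl
  intro p
  rw [Nat.factorization_lcm n1 n2, Finsupp.sup_apply]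
  exact sup_le (h1.natFactorization_le_one p) (h2.natFactorization_le_one p)

/-- The bound `Σ_{d₁,d₂ ≤ R squarefree, z-smooth} ν_{[d₁,d₂]} ≤ C(k) R² (log z)^{3k}`
from the estimation of the error term `E₀` in the proof of Theorem 3. -/
theorem stmt10 (k : ℕ) (hk : 1 ≤ k) :
    ∃ C : ℝ, 0 < C ∧ ∀ ν : ℕ → ℝ, ν 1 = 1 →
      (∀ m n : ℕ, Nat.Coprime m n → Squarefree m → Squarefree n →
        ν (m * n) = ν m * ν n) →
      (∀ p : ℕ, p.Prime → 0 ≤ ν p ∧ ν p ≤ k) →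
      ∀ R z : ℝ, 2 ≤ R → 2 ≤ z →
        ∑ d₁ ∈ (Finset.Icc 1 ⌊R⌋₊).filter
            (fun d => Squarefree d ∧ ∀ p : ℕ, p.Prime → p ∣ d → (p : ℝ) < z),
          ∑ d₂ ∈ (Finset.Icc 1 ⌊R⌋₊).filter
              (fun d => Squarefree d ∧ ∀ p : ℕ, p.Prime → p ∣ d → (p : ℝ) < z),
            ν (Nat.lcm d₁ d₂)
          ≤ C * R ^ 2 * Real.log z ^ (3 * k) := by
  refine ⟨Real.exp (14*k), Real.exp_pos _, ?_⟩
  intro ν h1 hmul hν R z hR hz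
  have hk1 : (1:ℝ) ≤ (k:ℝ) := by exact_mod_cast hk
  set A := (Finset.Icc 1 ⌊R⌋₊).filter
      (fun d => Squarefree d ∧ ∀ p : ℕ, p.Prime → p ∣ d → (p : ℝ) < z) with hA
  have hmemA : ∀ d ∈ A, (1 ≤ d ∧ d ≤ ⌊R⌋₊) ∧ Squarefree d ∧
      ∀ p : ℕ, p.Prime → p ∣ d → (p : ℝ) < z := by
    intro d hd
    rw [hA, Finset.mem_filter, Finset.mem_Icc] at hd
    exact ⟨hd.1, hd.2⟩
  set ω : ℕ → ℕ := fun d => d.primeFactors.card with hω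
  -- Step 1: termwise bound
  have step1 : ∀ d₁ ∈ A, ∀ d₂ ∈ A,
      ν (Nat.lcm d₁ d₂) ≤ (k:ℝ)^(ω d₁) * (k:ℝ)^(ω d₂) := by
    intro d₁ h₁ d₂ h₂
    obtain ⟨-, hsq1, -⟩ := hmemA d₁ h₁
    obtain ⟨-, hsq2, -⟩ := hmemA d₂ h₂
    have hsql : Squarefree (Nat.lcm d₁ d₂) := squarefree_lcm' hsq1 hsq2
    have hsub : (Nat.lcm d₁ d₂).primeFactors ⊆ d₁.primeFactors ∪ d₂.primeFactors := by
      intro p hp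
      have hpp := Nat.prime_of_mem_primeFactors hp
      have hdvd : p ∣ d₁ * d₂ :=
        (Nat.dvd_of_mem_primeFactors hp).trans
          (Nat.lcm_dvd (dvd_mul_right _ _) (dvd_mul_left _ _))
      rcases (Nat.Prime.dvd_mul hpp).mp hdvd with h | h
      · exact Finset.mem_union_left _ (Nat.mem_primeFactors.mpr ⟨hpp, h, hsq1.ne_zero⟩)
      · exact Finset.mem_union_right _ (Nat.mem_primeFactors.mpr ⟨hpp, h, hsq2.ne_zero⟩)
    have hcard : ω (Nat.lcm d₁ d₂) ≤ ω d₁ + ω d₂ :=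
      (Finset.card_le_card hsub).trans (Finset.card_union_le _ _)
    calc ν (Nat.lcm d₁ d₂) = ∏ p ∈ (Nat.lcm d₁ d₂).primeFactors, ν p :=
          nu_eq_prod h1 hmul _ hsql
      _ ≤ ∏ p ∈ (Nat.lcm d₁ d₂).primeFactors, (k:ℝ) := by
          refine Finset.prod_le_prod (fun p hp => (hν p (Nat.prime_of_mem_primeFactors hp)).1)
            (fun p hp => (hν p (Nat.prime_of_mem_primeFactors hp)).2)
      _ = (k:ℝ)^(ω (Nat.lcm d₁ d₂)) := by rw [Finset.prod_const]
      _ ≤ (k:ℝ)^(ω d₁ + ω d₂) := pow_le_pow_right₀ hk1 hcard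
      _ = (k:ℝ)^(ω d₁) * (k:ℝ)^(ω d₂) := pow_add _ _ _
  -- Step 2: reduce to square of single sum
  set T := ∑ d ∈ A, (k:ℝ)^(ω d) with hT
  have step2 : ∑ d₁ ∈ A, ∑ d₂ ∈ A, ν (Nat.lcm d₁ d₂) ≤ T * T := by
    rw [hT, Finset.sum_mul_sum]
    exact Finset.sum_le_sum fun d₁ h₁ => Finset.sum_le_sum fun d₂ h₂ => step1 d₁ h₁ d₂ h₂
  -- the prime set
  set N := ⌊z⌋₊ with hN
  have hN2 : 2 ≤ N := Nat.le_floor (by exact_mod_cast hz)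
  set P := Nat.primesBelow (N+1) with hP
  have hpfsub : ∀ d ∈ A, d.primeFactors ⊆ P := by
    intro d hd p hp
    obtain ⟨-, -, hsm⟩ := hmemA d hd
    have hpp := Nat.prime_of_mem_primeFactors hp
    have : (p:ℝ) < z := hsm p hpp (Nat.dvd_of_mem_primeFactors hp)
    rw [hP, Nat.mem_primesBelow]
    exact ⟨Nat.lt_succ_of_le (Nat.le_floor this.le), hpp⟩
  -- Step 3: T ≤ R * ∏ (1 + k/p)
  have hR0 : (0:ℝ) < R := by linarith
  have step3 : T ≤ R * ∏ p ∈ P, ((k:ℝ)/p + 1) := by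
    have h3a : T ≤ R * ∑ d ∈ A, ∏ p ∈ d.primeFactors, (k:ℝ)/p := by
      rw [hT, Finset.mul_sum]
      refine Finset.sum_le_sum fun d hd => ?_
      obtain ⟨⟨hd1, hdR⟩, hsq, -⟩ := hmemA d hd
      have hd0 : (0:ℝ) < d := by exact_mod_cast hd1
      have hprod : ∏ p ∈ d.primeFactors, ((p:ℝ)) = (d:ℝ) := by
        rw [← Nat.cast_prod]
        exact_mod_cast congrArg (Nat.cast : ℕ → ℝ) (Nat.prod_primeFactors_of_squarefree hsq)
      have heq : ∏ p ∈ d.primeFactors, (k:ℝ)/p = (k:ℝ)^(ω d) / d := by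
        rw [Finset.prod_div_distrib, Finset.prod_const, hprod]
      rw [heq]
      rw [mul_div_assoc' , le_div_iff₀ hd0]
      have hdle : (d:ℝ) ≤ R := le_trans (by exact_mod_cast hdR) (Nat.floor_le hR0.le)
      have hknn : (0:ℝ) ≤ (k:ℝ)^(ω d) := by positivity
      nlinarith
    have h3b : ∑ d ∈ A, ∏ p ∈ d.primeFactors, (k:ℝ)/p
        ≤ ∑ S ∈ P.powerset, ∏ p ∈ S, (k:ℝ)/p := by
      have hinj : ∀ d₁ ∈ A, ∀ d₂ ∈ A, d₁.primeFactors = d₂.primeFactors → d₁ = d₂ := by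
        intro d₁ h₁ d₂ h₂ hpf
        obtain ⟨-, hsq1, -⟩ := hmemA d₁ h₁
        obtain ⟨-, hsq2, -⟩ := hmemA d₂ h₂
        rw [← Nat.prod_primeFactors_of_squarefree hsq1,
          ← Nat.prod_primeFactors_of_squarefree hsq2, hpf]
      have him : ∑ S ∈ A.image Nat.primeFactors, ∏ p ∈ S, (k:ℝ)/p
          = ∑ d ∈ A, ∏ p ∈ d.primeFactors, (k:ℝ)/p := Finset.sum_image hinj
      rw [← him]
      refine Finset.sum_le_sum_of_subset_of_nonneg ?_ ?_
      · intro S hS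
        rw [Finset.mem_image] at hS
        obtain ⟨d, hd, rfl⟩ := hS
        exact Finset.mem_powerset.mpr (hpfsub d hd)
      · intro S hS _
        refine Finset.prod_nonneg fun p hp => by positivity
    have h3c : ∑ S ∈ P.powerset, ∏ p ∈ S, (k:ℝ)/p = ∏ p ∈ P, ((k:ℝ)/p + 1) := by
      rw [Finset.prod_add]
      simp
    calc T ≤ R * ∑ d ∈ A, ∏ p ∈ d.primeFactors, (k:ℝ)/p := h3a
      _ ≤ R * ∑ S ∈ P.powerset, ∏ p ∈ S, (k:ℝ)/p := by
          apply mul_le_mul_of_nonneg_left h3b hR0.le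
      _ = R * ∏ p ∈ P, ((k:ℝ)/p + 1) := by rw [h3c]
  -- Step 4: product bound
  have hlogz : (0:ℝ) < Real.log z := Real.log_pos (by linarith)
  have step4 : ∏ p ∈ P, ((k:ℝ)/p + 1)
      ≤ Real.exp ((k:ℝ) * (1.5 * Real.log (Real.log z) + 7)) := by
    have h4a : ∏ p ∈ P, ((k:ℝ)/p + 1) ≤ Real.exp ((k:ℝ) * ∑ p ∈ P, (1:ℝ)/p) := by
      calc ∏ p ∈ P, ((k:ℝ)/p + 1) ≤ ∏ p ∈ P, Real.exp ((k:ℝ)/p) := by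
            refine Finset.prod_le_prod (fun p hp => by positivity)
              (fun p hp => Real.add_one_le_exp _)
        _ = Real.exp (∑ p ∈ P, (k:ℝ)/p) := (Real.exp_sum _ _).symm
        _ = Real.exp ((k:ℝ) * ∑ p ∈ P, (1:ℝ)/p) := by
            rw [Finset.mul_sum]
            congr 1
            exact Finset.sum_congr rfl fun p hp => by ring
    have h4b : ∑ p ∈ P, (1:ℝ)/p ≤ 1.5 * Real.log (Real.log z) + 7 := by
      have := sum_recip_primes N hN2
      rw [← hP] at this
      have hNz : (N:ℝ) ≤ z := Nat.floor_le (by linarith)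
      have hNr : (2:ℝ) ≤ (N:ℝ) := by exact_mod_cast hN2
      have hlogN : Real.log 2 ≤ Real.log N :=
        Real.log_le_log (by norm_num) (by exact_mod_cast hN2)
      have h2p := Real.log_two_gt_d9
      have hmon : Real.log (Real.log N) ≤ Real.log (Real.log z) :=
        Real.log_le_log (by linarith) (Real.log_le_log (by linarith) hNz)
      linarith
    refine h4a.trans (Real.exp_le_exp.mpr ?_)
    have hk0 : (0:ℝ) ≤ k := by positivity
    exact mul_le_mul_of_nonneg_left h4b hk0
  -- assemble
  have hTnn : 0 ≤ T := Finset.sum_nonneg fun d hd => by positivity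
  have hX : T ≤ R * Real.exp ((k:ℝ) * (1.5 * Real.log (Real.log z) + 7)) :=
    step3.trans (mul_le_mul_of_nonneg_left step4 hR0.le)
  have hfinal : (R * Real.exp ((k:ℝ) * (1.5 * Real.log (Real.log z) + 7)))^2
      = Real.exp (14*k) * R^2 * Real.log z ^ (3*k) := by
    rw [mul_pow, sq (Real.exp _), ← Real.exp_add]
    have hsplit : (k:ℝ) * (1.5 * Real.log (Real.log z) + 7)
        + (k:ℝ) * (1.5 * Real.log (Real.log z) + 7)
        = 14*(k:ℝ) + ((3*k:ℕ):ℝ) * Real.log (Real.log z) := by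
      push_cast
      ring
    rw [hsplit, Real.exp_add, Real.exp_nat_mul, Real.exp_log hlogz]
    ring
  calc ∑ d₁ ∈ A, ∑ d₂ ∈ A, ν (Nat.lcm d₁ d₂) ≤ T * T := step2
    _ ≤ (R * Real.exp ((k:ℝ) * (1.5 * Real.log (Real.log z) + 7)))^2 := by
        rw [sq]
        exact mul_le_mul hX hX hTnn (by positivity)
    _ = Real.exp (14*k) * R^2 * Real.log z ^ (3*k) := hfinal
end

section
/- Let k ≥ 1 be an integer and g : ℕ → ℝ a nonnegative multiplicative function supported on squarefree numbers such that g(p) ≤ k/p + C₀/p² for all primes p and some constant C₀. Then there is a constant C, depending only on k and C₀, such that for all z ≥ 2, Σ_{l : every prime factor of l is < z} g(l) ≤ C·(log z)^k, the sum running over all positive integers l all of whose prime factors are less than z. -/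
open scoped Classical

open Finset

lemma aux_prod_pow_dvd (m : ℕ) (e : ℕ → ℕ) (s : Finset ℕ) (hs : ∀ p ∈ s, p.Prime)
    (hdvd : ∀ p ∈ s, p ^ (e p) ∣ m) : (∏ p ∈ s, p ^ e p) ∣ m := by
  induction s using Finset.cons_induction with
  | empty => simpa using one_dvd m
  | cons a s ha ih =>
    rw [Finset.prod_cons]
    have hcop : Nat.Coprime (a ^ e a) (∏ p ∈ s, p ^ e p) := by
      apply Nat.Coprime.pow_left
      apply Nat.Coprime.prod_right
      intro q hq
      exact Nat.Coprime.pow_right _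
        ((Nat.coprime_primes (hs a (mem_cons_self a s)) (hs q (mem_cons_of_mem hq))).mpr
          (by rintro rfl; exact ha hq))
    exact hcop.mul_dvd_of_dvd_of_dvd (hdvd a (mem_cons_self a s))
      (ih (fun p hp => hs p (mem_cons_of_mem hp)) (fun p hp => hdvd p (mem_cons_of_mem hp)))

lemma aux_pow_div_dvd_factorial {p N : ℕ} (hp : p.Prime) (hpN : p ≤ N) :
    p ^ (N / p) ∣ N.factorial := by
  rw [Nat.Prime.pow_dvd_factorial_iff hp (Nat.lt_succ_self _)]
  have h1 : (1 : ℕ) ∈ Finset.Ico 1 (Nat.log p N + 1) := by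
    simp [Nat.lt_succ_iff, Nat.succ_le_iff, Nat.log_pos hp.one_lt hpN]
  calc N / p = N / p ^ 1 := by rw [pow_one]
    _ ≤ ∑ i ∈ Finset.Ico 1 (Nat.log p N + 1), N / p ^ i :=
      Finset.single_le_sum (f := fun i => N / p ^ i) (fun i _ => Nat.zero_le _) h1

lemma aux_prod_dvd_factorial (N : ℕ) :
    (∏ p ∈ (N + 1).primesBelow, p ^ (N / p)) ∣ N.factorial :=
  aux_prod_pow_dvd _ _ _ (fun p hp => Nat.prime_of_mem_primesBelow hp)
    (fun p hp => aux_pow_div_dvd_factorial (Nat.prime_of_mem_primesBelow hp)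
      (Nat.lt_succ_iff.mp (Nat.lt_of_mem_primesBelow hp)))

lemma aux_primorial_eq (N : ℕ) :
    (primorial N : ℝ) = ∏ p ∈ (N + 1).primesBelow, (p : ℝ) := by
  rw [primorial, Nat.primesBelow]
  push_cast
  rfl

lemma aux_sum_log_le (N : ℕ) :
    ∑ p ∈ (N + 1).primesBelow, Real.log p ≤ N * Real.log 4 := by
  have h4 : ((4 : ℕ) : ℝ) ^ N = (4 : ℝ) ^ N := by norm_num
  have h : (primorial N : ℝ) ≤ (4 : ℝ) ^ N := by
    rw [← h4]
    exact_mod_cast primorial_le_4_pow N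
  have hlog : Real.log (primorial N : ℝ) = ∑ p ∈ (N + 1).primesBelow, Real.log p := by
    rw [aux_primorial_eq, Real.log_prod]
    intro p hp
    exact_mod_cast (Nat.prime_of_mem_primesBelow hp).pos.ne'
  have hpos : (0 : ℝ) < (primorial N : ℝ) := by exact_mod_cast primorial_pos N
  calc ∑ p ∈ (N + 1).primesBelow, Real.log p = Real.log (primorial N : ℝ) := hlog.symm
    _ ≤ Real.log ((4 : ℝ) ^ N) := Real.log_le_log hpos h
    _ = N * Real.log 4 := by rw [Real.log_pow]

lemma mertens1 (N : ℕ) (hN : 2 ≤ N) :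
    ∑ p ∈ (N + 1).primesBelow, Real.log p / p ≤ Real.log N + Real.log 4 := by
  have hNpos : (0 : ℝ) < N := by positivity
  set P : ℕ := ∏ p ∈ (N + 1).primesBelow, p ^ (N / p) with hPdef
  have hPpos : 0 < P := Finset.prod_pos fun p hp =>
    Nat.pow_pos (Nat.prime_of_mem_primesBelow hp).pos
  have hPle : (P : ℝ) ≤ (N : ℝ) ^ N := by
    have h1 : P ≤ N.factorial := Nat.le_of_dvd (Nat.factorial_pos N) (aux_prod_dvd_factorial N)
    have h2 : N.factorial ≤ N ^ N := Nat.factorial_le_pow N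
    exact_mod_cast h1.trans h2
  have hlogP : Real.log (P : ℝ) = ∑ p ∈ (N + 1).primesBelow, ((N / p : ℕ) : ℝ) * Real.log p := by
    have : (P : ℝ) = ∏ p ∈ (N + 1).primesBelow, (p : ℝ) ^ (N / p) := by rw [hPdef]; push_cast; rfl
    rw [this, Real.log_prod]
    · exact Finset.sum_congr rfl fun p _ => Real.log_pow _ _
    · intro p hp
      exact pow_ne_zero _ (by exact_mod_cast (Nat.prime_of_mem_primesBelow hp).pos.ne')
  have hsum1 : ∑ p ∈ (N + 1).primesBelow, ((N / p : ℕ) : ℝ) * Real.log p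
      ≤ (N : ℝ) * Real.log N := by
    rw [← hlogP]
    calc Real.log (P : ℝ) ≤ Real.log ((N : ℝ) ^ N) :=
          Real.log_le_log (by exact_mod_cast hPpos) hPle
      _ = (N : ℝ) * Real.log N := by rw [Real.log_pow]
  have key : ∀ p ∈ (N + 1).primesBelow,
      (N : ℝ) * (Real.log p / p) ≤ ((N / p : ℕ) : ℝ) * Real.log p + Real.log p := by
    intro p hp
    have hp' := Nat.prime_of_mem_primesBelow hp
    have hppos : (0 : ℝ) < p := by exact_mod_cast hp'.pos
    have hlogp : 0 ≤ Real.log p := Real.log_nonneg (by exact_mod_cast hp'.one_lt.le)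
    have hdiv : (N : ℝ) ≤ (p : ℝ) * (((N / p : ℕ) : ℝ) + 1) := by
      have h1 : (N : ℝ) = (p : ℝ) * ((N / p : ℕ) : ℝ) + ((N % p : ℕ) : ℝ) := by
        exact_mod_cast (Nat.div_add_mod N p).symm
      have h2 : ((N % p : ℕ) : ℝ) < p := by exact_mod_cast Nat.mod_lt _ hp'.pos
      nlinarith
    have h3 : (N : ℝ) * (Real.log p / p) ≤ ((p : ℝ) * (((N / p : ℕ) : ℝ) + 1)) *
        (Real.log p / p) := mul_le_mul_of_nonneg_right hdiv (by positivity)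
    have h4 : ((p : ℝ) * (((N / p : ℕ) : ℝ) + 1)) * (Real.log p / p)
        = ((N / p : ℕ) : ℝ) * Real.log p + Real.log p := by
      field_simp
    linarith
  have hmain : (N : ℝ) * (∑ p ∈ (N + 1).primesBelow, Real.log p / p)
      ≤ (N : ℝ) * (Real.log N + Real.log 4) := by
    rw [Finset.mul_sum]
    calc ∑ p ∈ (N + 1).primesBelow, (N : ℝ) * (Real.log p / p)
        ≤ ∑ p ∈ (N + 1).primesBelow, (((N / p : ℕ) : ℝ) * Real.log p + Real.log p) :=
          Finset.sum_le_sum key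
      _ = (∑ p ∈ (N + 1).primesBelow, ((N / p : ℕ) : ℝ) * Real.log p)
          + ∑ p ∈ (N + 1).primesBelow, Real.log p := Finset.sum_add_distrib
      _ ≤ (N : ℝ) * Real.log N + (N : ℝ) * Real.log 4 := by
          have := aux_sum_log_le N
          linarith
      _ = (N : ℝ) * (Real.log N + Real.log 4) := by ring
  exact le_of_mul_le_mul_left hmain hNpos

lemma aux_log_ineq {a b : ℝ} (ha : 0 < a) (hab : a ≤ b) :
    (b - a) / b ≤ Real.log b - Real.log a := by
  have hb : 0 < b := lt_of_lt_of_le ha hab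
  have h := Real.log_le_sub_one_of_pos (show 0 < a / b by positivity)
  rw [Real.log_div ha.ne' hb.ne'] at h
  have : a / b = 1 - (b - a) / b := by field_simp; ring
  rw [this] at h
  linarith

lemma aux_core {a b T c : ℝ} (ha : 0 < a) (hab : a ≤ b) (hT : T ≤ a + c) :
    (T - c) / a + Real.log a ≤ (T - c) / b + Real.log b := by
  have hb : 0 < b := lt_of_lt_of_le ha hab
  have h1 : (T - c) / a - (T - c) / b = (T - c) * ((b - a) / (a * b)) := by
    field_simp
  have h2 : (T - c) * ((b - a) / (a * b)) ≤ a * ((b - a) / (a * b)) :=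
    mul_le_mul_of_nonneg_right (by linarith) (div_nonneg (by linarith) (by positivity))
  have h3 : a * ((b - a) / (a * b)) = (b - a) / b := by field_simp
  have h4 := aux_log_ineq ha hab
  linarith

lemma mertens2_aux (N : ℕ) (hN : 2 ≤ N) :
    ∑ p ∈ (N + 1).primesBelow, 1 / (p : ℝ) ≤
      ((∑ p ∈ (N + 1).primesBelow, Real.log p / p) - Real.log 4) / Real.log N +
        Real.log (Real.log N) + (Real.log 4 / Real.log 2 - Real.log (Real.log 2)) := by
  induction N, hN using Nat.le_induction with
  | base =>
    have h3 : (3 : ℕ).primesBelow = {2} := by decide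
    rw [show (2 : ℕ) + 1 = 3 from rfl, h3]
    simp only [Finset.sum_singleton]
    push_cast
    have hl2 : Real.log 2 ≠ 0 := (Real.log_pos (by norm_num)).ne'
    have hlog4 : Real.log 4 = 2 * Real.log 2 := by
      rw [show (4 : ℝ) = 2 ^ 2 by norm_num, Real.log_pow]; push_cast; ring
    have heq : (Real.log 2 / 2 - Real.log 4) / Real.log 2 + Real.log (Real.log 2) +
        (Real.log 4 / Real.log 2 - Real.log (Real.log 2)) = 1 / 2 := by
      rw [hlog4]; field_simp; ring
    linarith
  | succ N hN ih =>
    have hNR : (2 : ℝ) ≤ (N : ℝ) := by exact_mod_cast hN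
    have ha : 0 < Real.log (N : ℝ) := Real.log_pos (by linarith)
    have hab : Real.log (N : ℝ) ≤ Real.log ((N + 1 : ℕ) : ℝ) :=
      Real.log_le_log (by linarith) (by exact_mod_cast Nat.le_succ N)
    have hb : 0 < Real.log ((N + 1 : ℕ) : ℝ) := lt_of_lt_of_le ha hab
    have hcore := aux_core (T := ∑ p ∈ (N + 1).primesBelow, Real.log p / p)
      (c := Real.log 4) ha hab (mertens1 N hN)
    rw [Nat.primesBelow_succ (N + 1)]
    by_cases hp : (N + 1).Prime
    · rw [if_pos hp, Finset.sum_insert (Nat.notMem_primesBelow _),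
        Finset.sum_insert (Nat.notMem_primesBelow _)]
      have h5 : Real.log ((N + 1 : ℕ) : ℝ) / ((N + 1 : ℕ) : ℝ) / Real.log ((N + 1 : ℕ) : ℝ)
          = 1 / ((N + 1 : ℕ) : ℝ) := by
        rw [div_div, mul_comm, ← div_div, div_self hb.ne']
      rw [add_sub_assoc, add_div, h5]
      linarith
    · rw [if_neg hp]
      linarith

lemma aux_sum_sq (s : Finset ℕ) (hs : ∀ n ∈ s, 2 ≤ n) :
    ∑ n ∈ s, 1 / (n : ℝ) ^ 2 ≤ 1 := by
  set M := s.sup id with hM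
  have hsub : s ⊆ Finset.Ico 2 (M + 1) := by
    intro n hn
    simp only [Finset.mem_Ico]
    exact ⟨hs n hn, Nat.lt_succ_of_le (Finset.le_sup (f := id) hn)⟩
  have h1 : ∑ n ∈ s, 1 / (n : ℝ) ^ 2 ≤ ∑ n ∈ Finset.Ico 2 (M + 1), 1 / (n : ℝ) ^ 2 :=
    Finset.sum_le_sum_of_subset_of_nonneg hsub (fun i _ _ => by positivity)
  have h2 : ∑ n ∈ Finset.Ico 2 (M + 1), 1 / (n : ℝ) ^ 2
      ≤ ∑ n ∈ Finset.Ico 2 (M + 1), (1 / ((n : ℝ) - 1) - 1 / n) := by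
    apply Finset.sum_le_sum
    intro n hn
    have hn2 : (2 : ℝ) ≤ (n : ℝ) := by exact_mod_cast (Finset.mem_Ico.mp hn).1
    have heq : 1 / ((n : ℝ) - 1) - 1 / n = 1 / (((n : ℝ) - 1) * n) := by
      rw [div_sub_div _ _ (by linarith) (by linarith : (n:ℝ) ≠ 0)]
      ring_nf
    rw [heq]
    apply one_div_le_one_div_of_le (by nlinarith)
    nlinarith
  have h3 : ∑ n ∈ Finset.Ico 2 (M + 1), (1 / ((n : ℝ) - 1) - 1 / n) ≤ 1 := by
    rw [Finset.sum_Ico_eq_sum_range]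
    have : ∀ i ∈ Finset.range (M + 1 - 2), 1 / (((2 + i : ℕ) : ℝ) - 1) - 1 / ((2 + i : ℕ) : ℝ)
        = 1 / ((i : ℝ) + 1) - 1 / ((i + 1 : ℕ) + 1 : ℝ) := by
      intro i _
      push_cast
      ring_nf
    rw [Finset.sum_congr rfl this, Finset.sum_range_sub' (f := fun i => 1 / ((i : ℝ) + 1))]
    simp
    positivity
  linarith

lemma mertens2 (N : ℕ) (hN : 2 ≤ N) :
    ∑ p ∈ (N + 1).primesBelow, 1 / (p : ℝ) ≤
      Real.log (Real.log N) + (1 + Real.log 4 / Real.log 2 - Real.log (Real.log 2)) := by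
  have ha : 0 < Real.log N := Real.log_pos (by exact_mod_cast Nat.lt_of_lt_of_le one_lt_two hN)
  have h1 := mertens2_aux N hN
  have h2 := mertens1 N hN
  have h3 : ((∑ p ∈ (N + 1).primesBelow, Real.log p / p) - Real.log 4) / Real.log N ≤ 1 := by
    rw [div_le_one ha]
    linarith
  linarith

lemma aux_gprod (g : ℕ → ℝ) (hg : MultSF g) (s : Finset ℕ) (hs : ∀ p ∈ s, p.Prime) :
    g (∏ p ∈ s, p) = ∏ p ∈ s, g p := by
  induction s using Finset.cons_induction with
  | empty => simpa using hg.1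
  | cons a t ha ih =>
    rw [Finset.prod_cons, Finset.prod_cons]
    have hcop : Nat.Coprime a (∏ p ∈ t, p) := by
      apply Nat.Coprime.prod_right
      intro q hq
      exact (Nat.coprime_primes (hs a (mem_cons_self a t)) (hs q (mem_cons_of_mem hq))).mpr
        (by rintro rfl; exact ha hq)
    rw [hg.2.1 _ _ hcop, ih (fun p hp => hs p (mem_cons_of_mem hp))]

/-- The bound `Σ_{l z-smooth} g(l) ≤ C (log z)^k` used in the proof of Theorem 4. -/
theorem stmt11 (k : ℕ) (hk : 1 ≤ k) (C₀ : ℝ) (hC₀ : 0 ≤ C₀) :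
    ∃ C : ℝ, 0 < C ∧ ∀ g : ℕ → ℝ, MultSF g → (∀ n : ℕ, 0 ≤ g n) →
      (∀ p : ℕ, p.Prime → g p ≤ k / p + C₀ / (p : ℝ) ^ 2) →
      ∀ z : ℝ, 2 ≤ z →
        Summable (fun l : {l : ℕ // 0 < l ∧ ∀ p : ℕ, p.Prime → p ∣ l → (p : ℝ) < z} =>
          g l) ∧
        (∑' l : {l : ℕ // 0 < l ∧ ∀ p : ℕ, p.Prime → p ∣ l → (p : ℝ) < z}, g l) ≤
          C * Real.log z ^ k := by
  set B : ℝ := 1 + Real.log 4 / Real.log 2 - Real.log (Real.log 2) with hB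
  refine ⟨Real.exp (k * B + C₀), Real.exp_pos _, ?_⟩
  intro g hg hg0 hgp z hz
  have hz0 : (0 : ℝ) < z := by linarith
  set N : ℕ := ⌊z⌋₊ with hNdef
  have hN2 : 2 ≤ N := Nat.le_floor (by exact_mod_cast hz)
  set F : Finset ℕ := (N + 1).primesBelow.filter (fun p => (p : ℝ) < z) with hF
  have hFP : ∀ p ∈ F, p.Prime := fun p hp =>
    Nat.prime_of_mem_primesBelow (Finset.mem_filter.mp hp).1
  have hmemF : ∀ p : ℕ, p.Prime → (p : ℝ) < z → p ∈ F := by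
    intro p pp hpz
    refine Finset.mem_filter.mpr ⟨Nat.mem_primesBelow.mpr ⟨?_, pp⟩, hpz⟩
    exact Nat.lt_succ_of_le (Nat.le_floor hpz.le)
  set s₀ : Finset ℕ := F.powerset.image (fun S => ∏ p ∈ S, p) with hs₀
  set P : ℕ → Prop := fun l => 0 < l ∧ ∀ p : ℕ, p.Prime → p ∣ l → (p : ℝ) < z with hP
  set s : Finset {l : ℕ // P l} := s₀.subtype P with hs
  have hss : ∀ l : {l : ℕ // P l}, l ∉ s → g l.1 = 0 := by
    intro l hl
    by_contra hne
    have hsf : Squarefree l.1 := by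
      by_contra h
      exact hne (hg.2.2 _ h)
    have hsub2 : l.1.primeFactors ⊆ F := fun p hp =>
      hmemF p (Nat.prime_of_mem_primeFactors hp)
        (l.2.2 p (Nat.prime_of_mem_primeFactors hp) (Nat.dvd_of_mem_primeFactors hp))
    have : l.1 ∈ s₀ := Finset.mem_image.mpr
      ⟨l.1.primeFactors, Finset.mem_powerset.mpr hsub2, Nat.prod_primeFactors_of_squarefree hsf⟩
    exact hl (Finset.mem_subtype.mpr this)
  refine ⟨summable_of_ne_finset_zero hss, ?_⟩
  rw [tsum_eq_sum hss]
  have step1 : ∑ l ∈ s, g l.1 ≤ ∑ m ∈ s₀, g m := by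
    rw [hs, Finset.sum_subtype_eq_sum_filter]
    exact Finset.sum_le_sum_of_subset_of_nonneg (Finset.filter_subset _ _)
      (fun i _ _ => hg0 i)
  have step2 : ∑ m ∈ s₀, g m = ∑ S ∈ F.powerset, ∏ p ∈ S, g p := by
    rw [hs₀, Finset.sum_image]
    · exact Finset.sum_congr rfl fun S hS =>
        aux_gprod g hg S (fun p hp => hFP p (Finset.mem_powerset.mp hS hp))
    · intro S hS T hT hprod
      have h1 := Nat.primeFactors_prod (fun p hp => hFP p (Finset.mem_powerset.mp hS hp))
      have h2 := Nat.primeFactors_prod (fun p hp => hFP p (Finset.mem_powerset.mp hT hp))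
      rw [← h1, ← h2]; exact congrArg Nat.primeFactors hprod
  have step3 : ∑ S ∈ F.powerset, ∏ p ∈ S, g p = ∏ p ∈ F, (g p + 1) := by
    rw [Finset.prod_add]
    exact (Finset.sum_congr rfl fun S _ => by simp).symm
  have step4 : ∏ p ∈ F, (g p + 1) ≤ Real.exp (∑ p ∈ F, g p) := by
    rw [Real.exp_sum]
    exact Finset.prod_le_prod (fun p _ => by linarith [hg0 p])
      (fun p _ => by linarith [Real.add_one_le_exp (g p)])
  have hsum_p : ∑ p ∈ F, 1 / (p : ℝ) ≤ Real.log (Real.log z) + B := by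
    have h1 : ∑ p ∈ F, 1 / (p : ℝ) ≤ ∑ p ∈ (N + 1).primesBelow, 1 / (p : ℝ) :=
      Finset.sum_le_sum_of_subset_of_nonneg (Finset.filter_subset _ _)
        (fun i _ _ => by positivity)
    have h2 := mertens2 N hN2
    have h3 : Real.log (Real.log N) ≤ Real.log (Real.log z) := by
      have hNz : (N : ℝ) ≤ z := Nat.floor_le hz0.le
      have hlogN : 0 < Real.log N := Real.log_pos (by exact_mod_cast hN2.trans_lt' one_lt_two)
      exact Real.log_le_log hlogN (Real.log_le_log (by positivity) hNz)
    linarith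
  have hsum_sq : ∑ p ∈ F, 1 / (p : ℝ) ^ 2 ≤ 1 :=
    aux_sum_sq F (fun p hp => (hFP p hp).two_le)
  have step5 : ∑ p ∈ F, g p ≤ k * (Real.log (Real.log z) + B) + C₀ := by
    have h1 : ∑ p ∈ F, g p ≤ ∑ p ∈ F, ((k : ℝ) / p + C₀ / (p : ℝ) ^ 2) :=
      Finset.sum_le_sum (fun p hp => hgp p (hFP p hp))
    have h2 : ∑ p ∈ F, ((k : ℝ) / p + C₀ / (p : ℝ) ^ 2)
        = (k : ℝ) * (∑ p ∈ F, 1 / (p : ℝ)) + C₀ * ∑ p ∈ F, 1 / (p : ℝ) ^ 2 := by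
      rw [Finset.mul_sum, Finset.mul_sum, ← Finset.sum_add_distrib]
      exact Finset.sum_congr rfl fun p _ => by ring
    have hk0 : (0 : ℝ) ≤ (k : ℝ) := Nat.cast_nonneg k
    have h3 : (k : ℝ) * (∑ p ∈ F, 1 / (p : ℝ)) ≤ (k : ℝ) * (Real.log (Real.log z) + B) :=
      mul_le_mul_of_nonneg_left hsum_p hk0
    have h4 : C₀ * ∑ p ∈ F, 1 / (p : ℝ) ^ 2 ≤ C₀ * 1 := by
      apply mul_le_mul_of_nonneg_left hsum_sq hC₀
    have h5 : ∑ p ∈ F, g p ≤ (k:ℝ) * ∑ p ∈ F, 1/(p:ℝ) + C₀ * ∑ p ∈ F, 1/(p:ℝ)^2 := by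
      rw [← h2]; exact h1
    clear_value B
    linarith
  have hlogz : 0 < Real.log z := Real.log_pos (by linarith)
  have final : Real.exp (∑ p ∈ F, g p) ≤ Real.exp (k * B + C₀) * Real.log z ^ k := by
    have h1 : Real.exp (∑ p ∈ F, g p) ≤ Real.exp ((k : ℝ) * (Real.log (Real.log z) + B) + C₀) :=
      Real.exp_le_exp.mpr step5
    have h2 : (k : ℝ) * (Real.log (Real.log z) + B) + C₀
        = ((k : ℝ) * B + C₀) + (k : ℝ) * Real.log (Real.log z) := by ring
    rw [h2, Real.exp_add] at h1
    have h3 : Real.exp ((k : ℝ) * Real.log (Real.log z)) = Real.log z ^ k := by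
      rw [← Real.log_pow, Real.exp_log (by positivity)]
    rw [h3] at h1
    exact h1
  calc ∑ l ∈ s, g l.1 ≤ ∑ m ∈ s₀, g m := step1
    _ = ∑ S ∈ F.powerset, ∏ p ∈ S, g p := step2
    _ = ∏ p ∈ F, (g p + 1) := step3
    _ ≤ Real.exp (∑ p ∈ F, g p) := step4
    _ ≤ Real.exp (↑k * B + C₀) * Real.log z ^ k := final
end
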